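/- arXiv:2109.11537 — 2 statements merged into one kernel-verified Lean document; each statement's English description precedes it below -/
import Mathlib

section
/- Let 1 < p < ∞, A ∈ ℝ^{n×d}, b ∈ ℝⁿ, C ∈ ℝ^{d×d}, v ∈ ℝ^d, and let OPT = min_{Cz=v} ‖Az − b‖_p^p. Let x satisfy Cx = v, set g = p·(|Ax − b|^{p−2} ⊙ (Ax − b)), and let α ≥ 1. Suppose Δ̃ is an α-approximate solution to the residual problem at x, i.e. CΔ̃ = 0 and gᵀAΔ̃ − ((p−1)/(p·2^p))·γ_p(|Ax − b|, AΔ̃) ≥ (1/α)·max_{CΔ=0} ( gᵀAΔ − ((p−1)/(p·2^p))·γ_p(|Ax − b|, AΔ) ). Then for any λ ∈ (0,1] with λ^{min{1, p−1}} ≤ (p−1)/(p·4^p), ‖A(x − λΔ̃) − b‖_p^p − OPT ≤ (1 − λ/α)·( ‖Ax − b‖_p^p − OPT ). -/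
open Matrix Finset

/-- The smoothed `p`-norm function `γ_p(t,x)`. -/
noncomputable def gammaFn (p t x : ℝ) : ℝ :=
  if |x| ≤ t then (p / 2) * t ^ (p - 2) * x ^ 2
  else |x| ^ p + (p / 2 - 1) * t ^ p

/-- Objective of the residual problem at `x` for `min_{Cx=v} ‖Ax−b‖_p^p`:
`Δ ↦ gᵀAΔ − ((p−1)/(p·2^p))·γ_p(|Ax−b|, AΔ)` where
`g = p(|Ax−b|^{p−2} ⊙ (Ax−b))`. -/
noncomputable def resObj {n d : ℕ} (p : ℝ) (A : Matrix (Fin n) (Fin d) ℝ)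
    (b : Fin n → ℝ) (x : Fin d → ℝ) (Δ : Fin d → ℝ) : ℝ :=
  (∑ i, (p * |(A.mulVec x - b) i| ^ (p - 2) * (A.mulVec x - b) i) * (A.mulVec Δ) i)
    - ((p - 1) / (p * 2 ^ p))
        * ∑ i, gammaFn p (|(A.mulVec x - b) i|) ((A.mulVec Δ) i)



section AuxLemmas
open Real Set

-- tangent line inequalities for rpow (convex case q ≥ 1, concave case q ≤ 1)
lemma tangent_ge {q a b : ℝ} (hq : 1 ≤ q) (hb : 0 < b) (ha : 0 ≤ a) :
    b ^ q + q * b ^ (q - 1) * (a - b) ≤ a ^ q := by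
  have hs : -1 ≤ a / b - 1 := by
    have : 0 ≤ a / b := div_nonneg ha hb.le
    linarith
  have h := one_add_mul_self_le_rpow_one_add hs hq
  rw [add_sub_cancel] at h
  have h2 : b ^ q * (1 + q * (a / b - 1)) ≤ b ^ q * (a / b) ^ q := by
    exact mul_le_mul_of_nonneg_left h (rpow_nonneg hb.le q)
  rw [div_rpow ha hb.le, mul_div_cancel₀] at h2
  · calc b ^ q + q * b ^ (q - 1) * (a - b)
        = b ^ q * (1 + q * (a / b - 1)) := by
          rw [rpow_sub_one hb.ne']
          field_simp
      _ ≤ a ^ q := h2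
  · exact (rpow_pos_of_pos hb q).ne'

lemma tangent_le {q a b : ℝ} (hq0 : 0 ≤ q) (hq : q ≤ 1) (hb : 0 < b) (ha : 0 ≤ a) :
    a ^ q ≤ b ^ q + q * b ^ (q - 1) * (a - b) := by
  have hs : -1 ≤ a / b - 1 := by
    have : 0 ≤ a / b := div_nonneg ha hb.le
    linarith
  have h := rpow_one_add_le_one_add_mul_self hs hq0 hq
  rw [add_sub_cancel] at h
  have h2 : b ^ q * (a / b) ^ q ≤ b ^ q * (1 + q * (a / b - 1)) := by
    exact mul_le_mul_of_nonneg_left h (rpow_nonneg hb.le q)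
  rw [div_rpow ha hb.le, mul_div_cancel₀] at h2
  · calc a ^ q ≤ b ^ q * (1 + q * (a / b - 1)) := h2
      _ = b ^ q + q * b ^ (q - 1) * (a - b) := by
          rw [rpow_sub_one hb.ne']
          field_simp
  · exact (rpow_pos_of_pos hb q).ne'

lemma two_rpow_big {q : ℝ} (hq : 0 ≤ q) : q + 2 ≤ (2:ℝ) ^ (q + 1) := by
  have h := one_add_mul_self_le_rpow_one_add (s := 1) (by norm_num) (p := q + 1) (by linarith)
  norm_num at h
  calc q + 2 = 1 + (q + 1) * 1 := by ring
    _ ≤ (2:ℝ) ^ (q+1) := by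
        have := one_add_mul_self_le_rpow_one_add (s := (1:ℝ)) (by norm_num) (p := q + 1) (by linarith)
        norm_num at this ⊢
        linarith

lemma auxA {q t x : ℝ} (hq : 0 < q) (ht : 0 < t) (hx : 0 ≤ x) (hxt : x ≤ t) :
    t ^ q + q / 2 * t ^ (q - 1) * x ≤ (t + x) ^ q := by
  have htx : 0 < t + x := by linarith
  rcases le_or_gt 1 q with h1 | h1
  · have := tangent_ge h1 ht (a := t + x) (by linarith)
    have h2 : q / 2 * t ^ (q-1) * x ≤ q * t ^ (q-1) * x := by
      have : (0:ℝ) ≤ t ^ (q-1) * x := mul_nonneg (rpow_nonneg ht.le _) hx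
      nlinarith
    nlinarith [this]
  · -- concave case: tangent at t + x, evaluated at t
    have := tangent_le hq.le h1.le htx (a := t) ht.le
    -- t^q ≤ (t+x)^q + q (t+x)^(q-1) (t - (t+x)) = (t+x)^q - q (t+x)^(q-1) x
    have hpow : (2:ℝ)⁻¹ * t ^ (q-1) ≤ (t + x) ^ (q - 1) := by
      have h2t : (t + x) ^ (q-1) ≥ (2*t) ^ (q-1) := by
        apply rpow_le_rpow_of_nonpos htx (by linarith) (by linarith)
      have : (2*t) ^ (q-1) = 2^(q-1) * t^(q-1) := mul_rpow (by norm_num) ht.le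
      have h12 : (2:ℝ)⁻¹ ≤ 2 ^ (q-1) := by
        have : (2:ℝ)⁻¹ = 2 ^ (-1 : ℝ) := by
          rw [rpow_neg_one]
        rw [this]
        exact rpow_le_rpow_of_exponent_le (by norm_num) (by linarith)
      nlinarith [rpow_nonneg ht.le (q-1)]
    have hterm : q / 2 * t ^ (q-1) * x ≤ q * (t+x) ^ (q-1) * x := by
      have := mul_le_mul_of_nonneg_right hpow hx
      have hq2 : q / 2 = q * 2⁻¹ := by ring
      nlinarith
    nlinarith [this]

lemma auxB {q t w : ℝ} (hq : 0 < q) (ht : 0 < t) (hw : 0 ≤ w) (hwt : w ≤ t) :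
    (t - w) ^ q + min q 1 * t ^ (q - 1) * w ≤ t ^ q := by
  rcases le_or_gt q 1 with h1 | h1
  · have hmin : min q 1 = q := min_eq_left h1
    have := tangent_le hq.le h1 ht (a := t - w) (by linarith)
    rw [hmin]; nlinarith
  · have hmin : min q 1 = 1 := min_eq_right h1.le
    rw [hmin]
    -- (t-w)^q ≤ t^(q-1) (t-w)
    have key : (t - w) ^ q ≤ t ^ (q-1) * (t - w) := by
      rcases eq_or_lt_of_le hwt with rfl | hlt
      · simp [zero_rpow (by positivity : q ≠ 0)]
      · have htw : 0 < t - w := by linarith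
        have h1' : (t - w) ^ q = (t-w) ^ (q-1) * (t - w) := by
          rw [← rpow_add_one htw.ne' (q-1)]; ring_nf
        rw [h1']
        have : (t - w) ^ (q-1) ≤ t ^ (q-1) :=
          rpow_le_rpow htw.le (by linarith) (by linarith)
        nlinarith
    have : t ^ (q-1) * (t - w) + t ^ (q-1) * w = t ^ q := by
      have : t ^ (q-1) * t = t ^ q := by
        rw [← rpow_add_one ht.ne' (q-1)]; ring_nf
      nlinarith
    nlinarith

lemma auxC {q t δ : ℝ} (hq : 0 < q) (ht : 0 < t) (hx : 0 ≤ δ) (hxt : δ ≤ t) :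
    (t + δ) ^ q ≤ t ^ q + 2 ^ (q + 1) * t ^ (q - 1) * δ := by
  have h2q : (1:ℝ) ≤ 2 ^ (q+1) := by
    have := two_rpow_big hq.le; linarith
  have htq : (0:ℝ) ≤ t ^ (q-1) * δ := mul_nonneg (rpow_nonneg ht.le _) hx
  rcases le_or_gt q 1 with h1 | h1
  · have := tangent_le hq.le h1 ht (a := t + δ) (by linarith)
    nlinarith
  · have hcx : ConvexOn ℝ (Ici 0) fun x : ℝ ↦ x ^ q := convexOn_rpow h1.le
    have hchord := hcx.2 (mem_Ici.mpr ht.le) (mem_Ici.mpr (by linarith : (0:ℝ) ≤ 2 * t))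
      (show (0:ℝ) ≤ 1 - δ/t by
        have : δ/t ≤ 1 := (div_le_one ht).mpr hxt
        linarith)
      (show (0:ℝ) ≤ δ/t by positivity)
      (show 1 - δ/t + δ/t = 1 by ring)
    simp only [smul_eq_mul] at hchord
    have harg : (1 - δ/t) * t + δ/t * (2*t) = t + δ := by field_simp; ring
    rw [harg] at hchord
    have h2t : (2*t) ^ q = 2^q * t^q := mul_rpow (by norm_num) ht.le
    have hdt : δ/t * t^q = t^(q-1) * δ := by
      rw [rpow_sub_one ht.ne']; field_simp
    have h2next : (2:ℝ)^q ≤ 2^(q+1) := rpow_le_rpow_of_exponent_le (by norm_num) (by linarith)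
    have h2qpos : (0:ℝ) < 2^q := rpow_pos_of_pos (by norm_num) q
    calc (t + δ) ^ q ≤ (1 - δ/t) * t^q + δ/t * (2^q * t^q) := by rw [← h2t]; exact hchord
      _ = t^q + (2^q - 1) * (t^(q-1) * δ) := by
          have : δ/t * (2^q * t^q) = 2^q * (δ/t * t^q) := by ring
          rw [this, hdt]
          have : (1 - δ/t) * t^q = t^q - δ/t*t^q := by ring
          rw [this, hdt]; ring
      _ ≤ t ^ q + 2 ^ (q + 1) * t ^ (q - 1) * δ := by nlinarith

lemma auxD {q t w : ℝ} (hq : 0 < q) (ht : 0 < t) (hw : 0 ≤ w) (hwt : w ≤ t) :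
    t ^ q ≤ (t - w) ^ q + 2 ^ (q + 1) * t ^ (q - 1) * w := by
  have htq : (0:ℝ) ≤ t ^ (q-1) * w := mul_nonneg (rpow_nonneg ht.le _) hw
  have h2q : (0:ℝ) < 2 ^ (q+1) := rpow_pos_of_pos (by norm_num) _
  rcases le_or_gt 1 q with h1 | h1
  · have := tangent_ge h1 ht (a := t - w) (by linarith)
    have hqle : q ≤ 2^(q+1) := by have := two_rpow_big hq.le; linarith
    nlinarith
  · -- q ≤ 1 : t^q = t^(q-1)(t-w) + t^(q-1) w ≤ (t-w)^q + t^(q-1) w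
    have key : t ^ (q-1) * (t - w) ≤ (t - w) ^ q := by
      rcases eq_or_lt_of_le hwt with rfl | hlt
      · simp [zero_rpow (by positivity : q ≠ 0), rpow_nonneg]
      · have htw : 0 < t - w := by linarith
        have h1' : (t - w) ^ q = (t-w) ^ (q-1) * (t - w) := by
          rw [← rpow_add_one htw.ne' (q-1)]; ring_nf
        rw [h1']
        have : t ^ (q-1) ≤ (t - w) ^ (q-1) :=
          rpow_le_rpow_of_nonpos htw (by linarith) (by linarith)
        nlinarith
    have hsplit : t ^ q = t ^ (q-1) * (t - w) + t ^ (q-1) * w := by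
      have : t ^ (q-1) * t = t ^ q := by
        rw [← rpow_add_one ht.ne' (q-1)]; ring_nf
      nlinarith
    have h1le : (1:ℝ) ≤ 2^(q+1) := by have := two_rpow_big hq.le; linarith
    nlinarith

lemma auxE {q t x : ℝ} (hq : 0 < q) (ht : 0 < t) (htx : t ≤ x) :
    min 1 (q/2) * x ^ q ≤ (t + x) ^ q - t ^ q := by
  have hx : 0 < x := lt_of_lt_of_le ht htx
  rcases le_or_gt 1 q with h1 | h1
  · have hmin : min 1 (q/2) = min 1 (q/2) := rfl
    have hm : min 1 (q/2) ≤ 1 := min_le_left _ _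
    -- (t+x)^q ≥ x^q + q x^(q-1) t ≥ x^q + t^q
    have htan := tangent_ge h1 hx (a := t + x) (by linarith)
    have hxq : t ^ (q-1) ≤ x ^ (q-1) := rpow_le_rpow ht.le htx (by linarith)
    have htt : t ^ (q-1) * t = t ^ q := by
      rw [← rpow_add_one ht.ne' (q-1)]; ring_nf
    have hq1 : t ^ q ≤ q * x ^ (q-1) * t := by
      nlinarith [mul_le_mul_of_nonneg_right hxq ht.le, rpow_nonneg ht.le q,
        rpow_nonneg ht.le (q-1)]
    have hxqnn : (0:ℝ) ≤ x ^ q := rpow_nonneg hx.le q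
    have hmx : min 1 (q/2) * x ^ q ≤ x ^ q := by nlinarith [min_le_left (1:ℝ) (q/2)]
    nlinarith
  · have hmin : min 1 (q/2) = q/2 := min_eq_right (by linarith)
    rw [hmin]
    have htan := tangent_le hq.le h1.le (b := t + x) (by linarith) (a := t) ht.le
    -- t^q ≤ (t+x)^q - q (t+x)^(q-1) x
    have hpow : (2:ℝ)⁻¹ * x ^ (q-1) ≤ (t + x) ^ (q - 1) := by
      have h2t : (2*x) ^ (q-1) ≤ (t + x) ^ (q-1) :=
        rpow_le_rpow_of_nonpos (by linarith) (by linarith) (by linarith)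
      have hmr : (2*x) ^ (q-1) = 2^(q-1) * x^(q-1) := mul_rpow (by norm_num) hx.le
      have h12 : (2:ℝ)⁻¹ ≤ 2 ^ (q-1) := by
        rw [show ((2:ℝ)⁻¹ = 2 ^ (-1:ℝ)) from (rpow_neg_one 2).symm]
        exact rpow_le_rpow_of_exponent_le (by norm_num) (by linarith)
      nlinarith [rpow_nonneg hx.le (q-1)]
    have hxx : x ^ (q-1) * x = x ^ q := by
      rw [← rpow_add_one hx.ne' (q-1)]; ring_nf
    have hstep : q/2 * x ^ q ≤ q * (t+x) ^ (q-1) * x := by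
      have := mul_le_mul_of_nonneg_right hpow hx.le
      nlinarith
    nlinarith

lemma auxF {q t x : ℝ} (hq : 0 < q) (ht : 0 < t) (htx : t ≤ x) :
    min 1 ((2:ℝ)^(1-q)) * x ^ q ≤ (x - t) ^ q + t ^ q := by
  have hx : 0 < x := lt_of_lt_of_le ht htx
  rcases le_or_gt q 1 with h1 | h1
  · -- subadditivity : x^q ≤ (x-t)^q + t^q
    have hmin : min 1 ((2:ℝ)^(1-q)) ≤ 1 := min_le_left _ _
    have hsub : x ^ q ≤ (x - t) ^ q + t ^ q := by
      have := NNReal.rpow_add_le_add_rpow (Real.toNNReal (x - t)) (Real.toNNReal t) hq.le h1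
      have hxt' : Real.toNNReal (x-t) + Real.toNNReal t = Real.toNNReal x := by
        rw [← Real.toNNReal_add (by linarith) ht.le]; ring_nf
      rw [hxt'] at this
      have h3 := NNReal.coe_le_coe.mpr this
      push_cast at h3
      rw [Real.coe_toNNReal _ hx.le, Real.coe_toNNReal _ (by linarith : (0:ℝ) ≤ x - t),
        Real.coe_toNNReal _ ht.le] at h3
      · simpa [NNReal.coe_rpow] using h3
    have hxq : (0:ℝ) ≤ x ^ q := rpow_nonneg hx.le q
    nlinarith
  · have hmin : min 1 ((2:ℝ)^(1-q)) ≤ (2:ℝ)^(1-q) := min_le_right _ _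
    -- midpoint convexity
    have hcx : ConvexOn ℝ (Ici 0) fun y : ℝ ↦ y ^ q := convexOn_rpow h1.le
    have hmid := hcx.2 (mem_Ici.mpr (by linarith : (0:ℝ) ≤ x - t)) (mem_Ici.mpr ht.le)
      (show (0:ℝ) ≤ 1/2 by norm_num) (show (0:ℝ) ≤ 1/2 by norm_num)
      (show (1:ℝ)/2 + 1/2 = 1 by norm_num)
    simp only [smul_eq_mul] at hmid
    have harg : 1/2 * (x - t) + 1/2 * t = x/2 := by ring
    rw [harg] at hmid
    have hx2 : (x/2) ^ q = x^q / 2^q := div_rpow hx.le (by norm_num : (0:ℝ) ≤ 2) q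
    have h2pos : (0:ℝ) < 2^q := rpow_pos_of_pos (by norm_num) q
    have h1q : (2:ℝ)^(1-q) * 2^q = 2 := by
      rw [← rpow_add (by norm_num : (0:ℝ) < 2)]; norm_num
    have hxq : (0:ℝ) ≤ x ^ q := rpow_nonneg hx.le q
    -- (x-t)^q + t^q ≥ 2 * (x/2)^q = 2^(1-q) x^q
    have : 2 * (x^q/2^q) ≤ (x-t)^q + t^q := by rw [← hx2]; linarith
    have heq : 2 * (x^q/2^q) = (2:ℝ)^(1-q) * x^q := by
      field_simp
      nlinarith
    nlinarith

lemma auxG {q t x : ℝ} (hq : 0 < q) (ht : 0 ≤ t) (htx : t ≤ x) :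
    (t + x) ^ q ≤ t ^ q + 2 ^ (q + 1) * x ^ q := by
  have hx : 0 ≤ x := le_trans ht htx
  have h1 : (t + x) ^ q ≤ (2*x) ^ q := rpow_le_rpow (by linarith) (by linarith) hq.le
  have h2 : (2*x) ^ q = 2^q * x^q := mul_rpow (by norm_num) hx
  have h3 : (2:ℝ)^q ≤ 2^(q+1) := rpow_le_rpow_of_exponent_le (by norm_num) (by linarith)
  nlinarith [rpow_nonneg ht q, rpow_nonneg hx q]

lemma auxH {q t x : ℝ} (hq : 0 < q) (ht : 0 ≤ t) (htx : t ≤ x) :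
    t ^ q + (x - t) ^ q ≤ 2 ^ (q + 1) * x ^ q := by
  have hx : 0 ≤ x := le_trans ht htx
  have h1 : t ^ q ≤ x ^ q := rpow_le_rpow ht htx hq.le
  have h2 : (x - t) ^ q ≤ x ^ q := rpow_le_rpow (by linarith) (by linarith) hq.le
  have h3 : (2:ℝ) ≤ 2^(q+1) := by
    calc (2:ℝ) = 2 ^ (1:ℝ) := (rpow_one 2).symm
      _ ≤ 2^(q+1) := rpow_le_rpow_of_exponent_le (by norm_num) (by linarith)
  nlinarith [rpow_nonneg hx q]

/-- If F has derivative F' everywhere, F a ≥ 0, and F' ≥ 0 on the interior of a convex set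
whose minimum is a, then F ≥ 0 on the set. -/
lemma nonneg_on_of_deriv {s : Set ℝ} (hs : Convex ℝ s) {a : ℝ} (ha : a ∈ s)
    (hmin : ∀ x ∈ s, a ≤ x) {F F' : ℝ → ℝ} (hd : ∀ x, HasDerivAt F (F' x) x)
    (h0 : 0 ≤ F a) (hF' : ∀ x ∈ interior s, 0 ≤ F' x) : ∀ x ∈ s, 0 ≤ F x := by
  have hdiff : Differentiable ℝ F := fun x => (hd x).differentiableAt
  have mono := monotoneOn_of_deriv_nonneg hs hdiff.continuous.continuousOn
    (hdiff.differentiableOn) (fun x hx => by rw [(hd x).deriv]; exact hF' x hx)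
  exact fun x hx => h0.trans (mono ha hx (hmin x hx))

/-- derivative of y ↦ (t+y)^p -/
lemma hasDeriv_shift (t : ℝ) {r : ℝ} (hr : 1 ≤ r) (x : ℝ) :
    HasDerivAt (fun y => (t + y) ^ r) (r * (t + x) ^ (r - 1)) x := by
  have h := (Real.hasDerivAt_rpow_const (x := t + x) (p := r) (Or.inr hr))
  have hid : HasDerivAt (fun y : ℝ => t + y) 1 x := (hasDerivAt_id x).const_add t
  have := h.comp x hid
  rw [mul_one] at this
  exact this

/-- derivative of y ↦ (t-y)^p -/
lemma hasDeriv_shift_neg (t : ℝ) {r : ℝ} (hr : 1 ≤ r) (x : ℝ) :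
    HasDerivAt (fun y => (t - y) ^ r) (-(r * (t - x) ^ (r - 1))) x := by
  have h := (Real.hasDerivAt_rpow_const (x := t - x) (p := r) (Or.inr hr))
  have hid : HasDerivAt (fun y : ℝ => t - y) (-1) x := (hasDerivAt_id x).neg.const_add t
  have := h.comp x hid
  rw [mul_neg_one] at this
  exact this

lemma hasDeriv_self {r : ℝ} (hr : 1 ≤ r) (x : ℝ) :
    HasDerivAt (fun y : ℝ => y ^ r) (r * x ^ (r - 1)) x :=
  Real.hasDerivAt_rpow_const (Or.inr hr)

lemma cfacts {p : ℝ} (hp : 1 < p) :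
    0 < (p-1)/(p*2^p) ∧ (p-1)/(p*2^p) ≤ (p-1)/2 ∧ (p-1)/(p*2^p) ≤ 1 := by
  have h2 : (2:ℝ) ≤ 2^p := by
    calc (2:ℝ) = 2 ^ (1:ℝ) := (rpow_one 2).symm
      _ ≤ 2^p := rpow_le_rpow_of_exponent_le (by norm_num) hp.le
  have hp0 : 0 < p := by linarith
  have hps : 2 ≤ p * 2^p := by nlinarith
  have hpos : 0 < p * 2^p := by nlinarith
  refine ⟨div_pos (by linarith) hpos, ?_, ?_⟩
  · exact div_le_div_of_nonneg_left (by linarith) (by norm_num) hps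
  · rw [div_le_one hpos]; nlinarith

lemma two_rpow_lb {p : ℝ} (hp : 1 ≤ p) : 2 + 2*(p-1)*Real.log 2 ≤ (2:ℝ)^p := by
  have h1 : (2:ℝ)^(p-1) * 2 = 2^p := by
    rw [← rpow_add_one (by norm_num : (2:ℝ) ≠ 0) (p-1)]; ring_nf
  have h2 : (2:ℝ)^(p-1) = Real.exp ((p-1) * Real.log 2) := by
    rw [rpow_def_of_pos (by norm_num)]; ring_nf
  have h3 : 1 + (p-1)*Real.log 2 ≤ Real.exp ((p-1)*Real.log 2) := by
    have := Real.add_one_le_exp ((p-1)*Real.log 2); linarith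
  rw [← h1, h2]; nlinarith [Real.add_one_le_exp ((p-1)*Real.log 2)]

lemma B1Lpos {p t : ℝ} (hp : 1 < p) (ht : 0 < t) :
    ∀ δ ∈ Icc (0:ℝ) t,
      t^p + p*t^(p-1)*δ + (p-1)/(p*2^p)*(p/2*t^(p-2)*δ^2) ≤ (t+δ)^p := by
  set c := (p-1)/(p*2^p) with hc
  obtain ⟨hc0, hc2, hc1⟩ := cfacts hp
  have key : ∀ δ ∈ Icc (0:ℝ) t,
      0 ≤ (t+δ)^p - ((t^p + p*t^(p-1)*δ) + c*(p/2*t^(p-2)*δ^2)) := by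
    apply nonneg_on_of_deriv (convex_Icc 0 t) (left_mem_Icc.mpr ht.le)
      (fun x hx => hx.1)
      (F' := fun y => p*(t+y)^(p-1) - (p*t^(p-1) + c*(p/2*t^(p-2)*(2*y))))
    · intro y
      have hb : HasDerivAt (fun y : ℝ => y^(2:ℕ)) (2*y) y := by
        simpa using hasDerivAt_pow 2 y
      have h := (hasDeriv_shift t hp.le y).sub
        ((((hasDerivAt_id y).const_mul (p*t^(p-1))).const_add (t^p)).add
          ((hb.const_mul (p/2*t^(p-2))).const_mul c))
      convert h using 2 <;> first | rfl | ring
    · simp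
    · intro x hx
      rw [interior_Icc] at hx
      obtain ⟨hx0, hxt⟩ := hx
      have hA := auxA (q := p-1) (by linarith) ht hx0.le hxt.le
      have hexp : p - 1 - 1 = p - 2 := by ring
      rw [hexp] at hA
      have htx : (0:ℝ) ≤ t^(p-2)*x := mul_nonneg (rpow_nonneg ht.le _) hx0.le
      have : c * (t^(p-2)*x) ≤ (p-1)/2 * (t^(p-2)*x) := by nlinarith
      nlinarith
  intro δ hδ
  have := key δ hδ
  linarith

lemma B1Lneg {p t : ℝ} (hp : 1 < p) (ht : 0 < t) :
    ∀ w ∈ Icc (0:ℝ) t,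
      t^p - p*t^(p-1)*w + (p-1)/(p*2^p)*(p/2*t^(p-2)*w^2) ≤ (t-w)^p := by
  set c := (p-1)/(p*2^p) with hc
  obtain ⟨hc0, hc2, hc1⟩ := cfacts hp
  have hcq : c ≤ min (p-1) 1 := by
    rcases le_total (p-1) 1 with h | h
    · rw [min_eq_left h]; calc c ≤ (p-1)/2 := hc2
        _ ≤ p-1 := by linarith
    · rw [min_eq_right h]; exact hc1
  have key : ∀ w ∈ Icc (0:ℝ) t,
      0 ≤ (t-w)^p - (t^p + -(p*t^(p-1)*w) + c*(p/2*t^(p-2)*w^2)) := by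
    apply nonneg_on_of_deriv (convex_Icc 0 t) (left_mem_Icc.mpr ht.le)
      (fun x hx => hx.1)
      (F' := fun y => -(p*(t-y)^(p-1)) - (-(p*t^(p-1)) + c*(p/2*t^(p-2)*(2*y))))
    · intro y
      have hb : HasDerivAt (fun y : ℝ => y^(2:ℕ)) (2*y) y := by
        simpa using hasDerivAt_pow 2 y
      have h := (hasDeriv_shift_neg t hp.le y).sub
        (((((hasDerivAt_id y).const_mul (p*t^(p-1))).neg).const_add (t^p)).add
          ((hb.const_mul (p/2*t^(p-2))).const_mul c))
      convert h using 2 <;> first | rfl | ring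
    · simp
    · intro x hx
      rw [interior_Icc] at hx
      obtain ⟨hx0, hxt⟩ := hx
      have hB := auxB (q := p-1) (by linarith) ht hx0.le hxt.le
      have hexp : p - 1 - 1 = p - 2 := by ring
      rw [hexp] at hB
      have htx : (0:ℝ) ≤ t^(p-2)*x := mul_nonneg (rpow_nonneg ht.le _) hx0.le
      have hmin0 : 0 ≤ min (p-1) 1 := le_min (by linarith) (by norm_num)
      have : c * (t^(p-2)*x) ≤ min (p-1) 1 * (t^(p-2)*x) := by nlinarith
      nlinarith
  intro w hw
  have := key w hw
  linarith

lemma B1Upos {p t : ℝ} (hp : 1 < p) (ht : 0 < t) :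
    ∀ δ ∈ Icc (0:ℝ) t,
      (t+δ)^p ≤ t^p + p*t^(p-1)*δ + 2^p*(p/2*t^(p-2)*δ^2) := by
  have key : ∀ δ ∈ Icc (0:ℝ) t,
      0 ≤ t^p + p*t^(p-1)*δ + 2^p*(p/2*t^(p-2)*δ^2) - (t+δ)^p := by
    apply nonneg_on_of_deriv (convex_Icc 0 t) (left_mem_Icc.mpr ht.le)
      (fun x hx => hx.1)
      (F' := fun y => p*t^(p-1) + 2^p*(p/2*t^(p-2)*(2*y)) - p*(t+y)^(p-1))
    · intro y
      have hb : HasDerivAt (fun y : ℝ => y^(2:ℕ)) (2*y) y := by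
        simpa using hasDerivAt_pow 2 y
      have h := ((((hasDerivAt_id y).const_mul (p*t^(p-1))).const_add (t^p)).add
          ((hb.const_mul (p/2*t^(p-2))).const_mul (2^p))).sub (hasDeriv_shift t hp.le y)
      convert h using 2 <;> first | rfl | ring
    · simp
    · intro x hx
      rw [interior_Icc] at hx
      obtain ⟨hx0, hxt⟩ := hx
      have hC := auxC (q := p-1) (by linarith) ht hx0.le hxt.le
      have hexp : p - 1 - 1 = p - 2 := by ring
      have hexp2 : p - 1 + 1 = p := by ring
      rw [hexp, hexp2] at hC
      nlinarith
  intro δ hδ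
  have := key δ hδ
  linarith

lemma B1Uneg {p t : ℝ} (hp : 1 < p) (ht : 0 < t) :
    ∀ w ∈ Icc (0:ℝ) t,
      (t-w)^p ≤ t^p + -(p*t^(p-1)*w) + 2^p*(p/2*t^(p-2)*w^2) := by
  have key : ∀ w ∈ Icc (0:ℝ) t,
      0 ≤ t^p + -(p*t^(p-1)*w) + 2^p*(p/2*t^(p-2)*w^2) - (t-w)^p := by
    apply nonneg_on_of_deriv (convex_Icc 0 t) (left_mem_Icc.mpr ht.le)
      (fun x hx => hx.1)
      (F' := fun y => -(p*t^(p-1)) + 2^p*(p/2*t^(p-2)*(2*y)) - -(p*(t-y)^(p-1)))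
    · intro y
      have hb : HasDerivAt (fun y : ℝ => y^(2:ℕ)) (2*y) y := by
        simpa using hasDerivAt_pow 2 y
      have h := (((((hasDerivAt_id y).const_mul (p*t^(p-1))).neg).const_add (t^p)).add
          ((hb.const_mul (p/2*t^(p-2))).const_mul (2^p))).sub (hasDeriv_shift_neg t hp.le y)
      convert h using 2 <;> first | rfl | ring
    · simp
    · intro x hx
      rw [interior_Icc] at hx
      obtain ⟨hx0, hxt⟩ := hx
      have hD := auxD (q := p-1) (by linarith) ht hx0.le hxt.le
      have hexp : p - 1 - 1 = p - 2 := by ring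
      have hexp2 : p - 1 + 1 = p := by ring
      rw [hexp, hexp2] at hD
      nlinarith
  intro w hw
  have := key w hw
  linarith

lemma B2Lpos {p t : ℝ} (hp : 1 < p) (ht : 0 < t) :
    ∀ δ ∈ Ici t,
      t^p + p*t^(p-1)*δ + (p-1)/(p*2^p)*(δ^p + (p/2-1)*t^p) ≤ (t+δ)^p := by
  set c := (p-1)/(p*2^p) with hc
  obtain ⟨hc0, hc2, hc1⟩ := cfacts hp
  have hcmin : c ≤ min 1 ((p-1)/2) := le_min hc1 hc2
  have htp : (0:ℝ) ≤ t^p := rpow_nonneg ht.le p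
  have key : ∀ δ ∈ Ici t,
      0 ≤ (t+δ)^p - (t^p + p*t^(p-1)*δ + c*(δ^p + (p/2-1)*t^p)) := by
    apply nonneg_on_of_deriv (convex_Ici t) self_mem_Ici
      (fun x hx => hx)
      (F' := fun y => p*(t+y)^(p-1) - (p*t^(p-1) + c*(p*y^(p-1) + 0)))
    · intro y
      have h := (hasDeriv_shift t hp.le y).sub
        ((((hasDerivAt_id y).const_mul (p*t^(p-1))).const_add (t^p)).add
          (((hasDeriv_self hp.le y).add_const ((p/2-1)*t^p)).const_mul c))
      convert h using 2 <;> first | rfl | ring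
    · -- value at δ = t
      have h2t : (t+t)^p = 2^p * t^p := by
        rw [show t + t = 2*t by ring, mul_rpow (by norm_num : (0:ℝ) ≤ 2) ht.le]
      have htt : t^(p-1)*t = t^p := by
        rw [← rpow_add_one ht.ne' (p-1)]; ring_nf
      have hlb := two_rpow_lb hp.le
      have hlog : (0.6931471803 : ℝ) < Real.log 2 := Real.log_two_gt_d9
      have h4 : (4:ℝ) ≤ 2^(p+1) := by
        calc (4:ℝ) = 2^(2:ℝ) := by
              rw [show (2:ℝ)^(2:ℝ) = 2^(2:ℕ) by rw [← rpow_natCast]; norm_num]; norm_num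
          _ ≤ 2^(p+1) := rpow_le_rpow_of_exponent_le (by norm_num) (by linarith)
      -- c * p/2 = (p-1)/2^(p+1) ≤ (p-1)/4
      have h2p1 : (2:ℝ)^(p+1) = 2^p * 2 := rpow_add_one (by norm_num) p
      have h2p0 : (0:ℝ) < 2^p := rpow_pos_of_pos (by norm_num) p
      have h2ge : (2:ℝ) ≤ 2^p := by
        calc (2:ℝ) = 2 ^ (1:ℝ) := (rpow_one 2).symm
          _ ≤ 2^p := rpow_le_rpow_of_exponent_le (by norm_num) hp.le
      have hcp : c * (p/2) ≤ (p-1)/4 := by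
        rw [hc, div_mul_eq_mul_div, div_le_div_iff₀ (by positivity) (by norm_num)]
        nlinarith [mul_le_mul_of_nonneg_left h2ge
          (mul_nonneg (by linarith : (0:ℝ) ≤ p - 1) (by linarith : (0:ℝ) ≤ p))]
      have hkey : c * (p/2) ≤ (p-1)*(2*Real.log 2 - 1) := by
        have : (p-1)/4 ≤ (p-1)*(2*Real.log 2 - 1) := by nlinarith
        linarith
      have hval : 2^p - 1 - p ≥ (p-1)*(2*Real.log 2 - 1) := by nlinarith
      have expand : (t+t)^p - (t^p + p*t^(p-1)*t + c*(t^p + (p/2-1)*t^p))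
          = (2^p - 1 - p - c*(p/2)) * t^p := by
        rw [h2t, mul_assoc p, htt]; ring
      rw [expand]
      nlinarith
    · intro x hx
      rw [interior_Ici] at hx
      have hE := auxE (q := p-1) (by linarith) ht (le_of_lt hx)
      have hxq : (0:ℝ) ≤ x^(p-1) := rpow_nonneg (by linarith [ht.trans hx] : (0:ℝ) ≤ x) _
      have hcx : c * x^(p-1) ≤ min 1 ((p-1)/2) * x^(p-1) := by nlinarith
      nlinarith
  intro δ hδ
  have := key δ hδ
  linarith

lemma B2Lneg {p t : ℝ} (hp : 1 < p) (ht : 0 < t) :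
    ∀ e ∈ Ici t,
      t^p + -(p*t^(p-1)*e) + (p-1)/(p*2^p)*(e^p + (p/2-1)*t^p) ≤ (e-t)^p := by
  set c := (p-1)/(p*2^p) with hc
  obtain ⟨hc0, hc2, hc1⟩ := cfacts hp
  have h2p0 : (0:ℝ) < 2^p := rpow_pos_of_pos (by norm_num) p
  have htp : (0:ℝ) ≤ t^p := rpow_nonneg ht.le p
  have hc4 : c * 2^p ≤ 4 := by
    rw [hc, div_mul_eq_mul_div, div_le_iff₀ (by positivity)]
    nlinarith
  have hcmin : c ≤ min 1 ((2:ℝ)^(2-p)) := by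
    apply le_min hc1
    have h22 : (2:ℝ)^(2:ℝ) = 4 := by
      rw [show ((2:ℝ):ℝ) = ((2:ℕ):ℝ) by norm_num, rpow_natCast]; norm_num
    have h2sub : (2:ℝ)^(2-p) = 4/2^p := by
      rw [rpow_sub (by norm_num : (0:ℝ) < 2), h22]
    rw [h2sub, le_div_iff₀ h2p0]
    linarith
  have key : ∀ e ∈ Ici t,
      0 ≤ (-t+e)^p - (t^p + -(p*t^(p-1)*e) + c*(e^p + (p/2-1)*t^p)) := by
    apply nonneg_on_of_deriv (convex_Ici t) self_mem_Ici (fun x hx => hx)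
      (F' := fun y => p*(-t+y)^(p-1) - (-(p*t^(p-1)) + c*(p*y^(p-1) + 0)))
    · intro y
      have h := (hasDeriv_shift (-t) hp.le y).sub
        (((((hasDerivAt_id y).const_mul (p*t^(p-1))).neg).const_add (t^p)).add
          (((hasDeriv_self hp.le y).add_const ((p/2-1)*t^p)).const_mul c))
      convert h using 2 <;> first | rfl | ring
    · have h0 : (-t+t : ℝ) = 0 := by ring
      have htt : t^(p-1)*t = t^p := by
        rw [← rpow_add_one ht.ne' (p-1)]; ring_nf
      have hz : ((0:ℝ))^p = 0 := zero_rpow (by positivity)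
      have hcp : c * (p/2) ≤ (p-1)/4 := by
        have h2ge : (2:ℝ) ≤ 2^p := by
          calc (2:ℝ) = 2 ^ (1:ℝ) := (rpow_one 2).symm
            _ ≤ 2^p := rpow_le_rpow_of_exponent_le (by norm_num) hp.le
        rw [hc, div_mul_eq_mul_div, div_le_div_iff₀ (by positivity) (by norm_num)]
        nlinarith [mul_le_mul_of_nonneg_left h2ge
          (mul_nonneg (by linarith : (0:ℝ) ≤ p - 1) (by linarith : (0:ℝ) ≤ p))]
      have expand : (-t+t)^p - (t^p + -(p*t^(p-1)*t) + c*(t^p + (p/2-1)*t^p))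
          = (p - 1 - c*(p/2))*t^p := by
        rw [h0, hz, mul_assoc p, htt]; ring
      rw [expand]
      nlinarith
    · intro x hx
      rw [interior_Ici] at hx
      have hF := auxF (q := p-1) (by linarith) ht (le_of_lt hx)
      rw [show 1-(p-1) = 2-p from by ring] at hF
      have hxq : (0:ℝ) ≤ x^(p-1) := rpow_nonneg (by linarith [ht.trans hx] : (0:ℝ) ≤ x) _
      have hcx : c * x^(p-1) ≤ min 1 ((2:ℝ)^(2-p)) * x^(p-1) := by nlinarith
      rw [show x - t = -t + x from by ring] at hF
      nlinarith
  intro e he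
  have := key e he
  rw [show -t + e = e - t from by ring] at this
  linarith

lemma B2Upos {p t : ℝ} (hp : 1 < p) (ht : 0 < t) :
    ∀ δ ∈ Ici t,
      (t+δ)^p ≤ t^p + p*t^(p-1)*δ + 2^p*(δ^p + (p/2-1)*t^p) := by
  have h2p0 : (0:ℝ) < 2^p := rpow_pos_of_pos (by norm_num) p
  have htp : (0:ℝ) ≤ t^p := rpow_nonneg ht.le p
  have hs1 : (1:ℝ) ≤ 2^(p-1) := by
    rw [show (1:ℝ) = 2^(0:ℝ) from (rpow_zero 2).symm]
    exact rpow_le_rpow_of_exponent_le (by norm_num) (by linarith)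
  have h2p1 : (2:ℝ)^p = 2^(p-1)*2 := by
    rw [← rpow_add_one (by norm_num : (2:ℝ) ≠ 0) (p-1)]; ring_nf
  have key : ∀ δ ∈ Ici t,
      0 ≤ t^p + p*t^(p-1)*δ + 2^p*(δ^p + (p/2-1)*t^p) - (t+δ)^p := by
    apply nonneg_on_of_deriv (convex_Ici t) self_mem_Ici (fun x hx => hx)
      (F' := fun y => p*t^(p-1) + 2^p*(p*y^(p-1) + 0) - p*(t+y)^(p-1))
    · intro y
      have h := ((((hasDerivAt_id y).const_mul (p*t^(p-1))).const_add (t^p)).add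
          (((hasDeriv_self hp.le y).add_const ((p/2-1)*t^p)).const_mul (2^p))).sub
          (hasDeriv_shift t hp.le y)
      convert h using 2 <;> first | rfl | ring
    · have h2t : (t+t)^p = 2^p * t^p := by
        rw [show t + t = 2*t by ring, mul_rpow (by norm_num : (0:ℝ) ≤ 2) ht.le]
      have htt : t^(p-1)*t = t^p := by
        rw [← rpow_add_one ht.ne' (p-1)]; ring_nf
      have expand : t^p + p*t^(p-1)*t + 2^p*(t^p + (p/2-1)*t^p) - (t+t)^p
          = (1 + p + (p/2)*2^p - 2^p)*t^p := by
        rw [h2t, mul_assoc p, htt]; ring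
      rw [expand]
      have hcoef : 0 ≤ 1 + p + p/2*2^p - 2^p := by
        rcases le_total p 2 with h2 | h2
        · have hs2 : (2:ℝ)^(p-1) ≤ 2 := by
            calc (2:ℝ)^(p-1) ≤ 2^(1:ℝ) := rpow_le_rpow_of_exponent_le (by norm_num) (by linarith)
              _ = 2 := rpow_one 2
          nlinarith [mul_nonneg (sub_nonneg.mpr h2) (sub_nonneg.mpr hs2)]
        · nlinarith [mul_nonneg (sub_nonneg.mpr h2) (by linarith : (0:ℝ) ≤ 2^(p-1))]
      exact mul_nonneg hcoef htp
    · intro x hx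
      rw [interior_Ici] at hx
      have hG := auxG (q := p-1) (by linarith) ht.le (le_of_lt hx)
      rw [show p-1+1 = p from by ring] at hG
      nlinarith
  intro δ hδ
  have := key δ hδ
  linarith

lemma B2Uneg {p t : ℝ} (hp : 1 < p) (ht : 0 < t) :
    ∀ e ∈ Ici t,
      (e-t)^p ≤ t^p + -(p*t^(p-1)*e) + 2^p*(e^p + (p/2-1)*t^p) := by
  have h2p0 : (0:ℝ) < 2^p := rpow_pos_of_pos (by norm_num) p
  have htp : (0:ℝ) ≤ t^p := rpow_nonneg ht.le p
  have hs1 : (1:ℝ) ≤ 2^(p-1) := by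
    rw [show (1:ℝ) = 2^(0:ℝ) from (rpow_zero 2).symm]
    exact rpow_le_rpow_of_exponent_le (by norm_num) (by linarith)
  have h2p1 : (2:ℝ)^p = 2^(p-1)*2 := by
    rw [← rpow_add_one (by norm_num : (2:ℝ) ≠ 0) (p-1)]; ring_nf
  have key : ∀ e ∈ Ici t,
      0 ≤ t^p + -(p*t^(p-1)*e) + 2^p*(e^p + (p/2-1)*t^p) - (-t+e)^p := by
    apply nonneg_on_of_deriv (convex_Ici t) self_mem_Ici (fun x hx => hx)
      (F' := fun y => -(p*t^(p-1)) + 2^p*(p*y^(p-1) + 0) - p*(-t+y)^(p-1))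
    · intro y
      have h := (((((hasDerivAt_id y).const_mul (p*t^(p-1))).neg).const_add (t^p)).add
          (((hasDeriv_self hp.le y).add_const ((p/2-1)*t^p)).const_mul (2^p))).sub
          (hasDeriv_shift (-t) hp.le y)
      convert h using 2 <;> first | rfl | ring
    · have h0 : (-t+t : ℝ) = 0 := by ring
      have hz : ((0:ℝ))^p = 0 := zero_rpow (by positivity)
      have htt : t^(p-1)*t = t^p := by
        rw [← rpow_add_one ht.ne' (p-1)]; ring_nf
      have expand : t^p + -(p*t^(p-1)*t) + 2^p*(t^p + (p/2-1)*t^p) - (-t+t)^p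
          = (1 - p + (p/2)*2^p)*t^p := by
        rw [h0, hz, mul_assoc p, htt]; ring
      rw [expand]
      have hcoef : 0 ≤ 1 - p + p/2*2^p := by
        nlinarith [mul_le_mul_of_nonneg_left hs1 (by linarith : (0:ℝ) ≤ p)]
      exact mul_nonneg hcoef htp
    · intro x hx
      rw [interior_Ici] at hx
      have hH := auxH (q := p-1) (by linarith) ht.le (le_of_lt hx)
      rw [show p-1+1 = p from by ring, show x - t = -t + x from by ring] at hH
      nlinarith
  intro e he
  have := key e he
  rw [show -t + e = e - t from by ring] at this
  linarith

lemma gammaFn_neg (p t x : ℝ) : gammaFn p t (-x) = gammaFn p t x := by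
  unfold gammaFn
  rw [abs_neg, neg_pow]
  norm_num

lemma gammaFn_nonneg {p t : ℝ} (hp : 1 < p) (ht : 0 ≤ t) (x : ℝ) : 0 ≤ gammaFn p t x := by
  unfold gammaFn
  split_ifs with h
  · positivity
  · push_neg at h
    have hax : (0:ℝ) ≤ |x| := abs_nonneg x
    have h1 : t^p ≤ |x|^p := rpow_le_rpow ht h.le (by linarith)
    have h2 : (0:ℝ) ≤ t^p := rpow_nonneg ht p
    have h3 : (0:ℝ) ≤ |x|^p := rpow_nonneg hax p
    rcases le_total p 2 with h4 | h4
    · nlinarith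
    · nlinarith

lemma core_low {p t : ℝ} (hp : 1 < p) (ht : 0 ≤ t) (δ : ℝ) :
    t^p + p*t^(p-1)*δ + (p-1)/(p*2^p) * gammaFn p t δ ≤ |t+δ|^p := by
  obtain ⟨hc0, hc2, hc1⟩ := cfacts hp
  rcases eq_or_lt_of_le ht with rfl | ht
  · have h0p : (0:ℝ)^p = 0 := zero_rpow (by positivity)
    have h0p1 : (0:ℝ)^(p-1) = 0 := zero_rpow (by intro h; linarith [h] : p - 1 ≠ 0)
    rw [h0p, h0p1]
    unfold gammaFn
    split_ifs with h
    · have : δ = 0 := by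
        have := abs_nonneg δ; have := abs_eq_zero.mp (le_antisymm h this)
        exact this
      subst this
      simp [h0p]
    · rw [h0p]
      have : |0 + δ| = |δ| := by norm_num
      rw [this]
      have h3 : (0:ℝ) ≤ |δ|^p := rpow_nonneg (abs_nonneg δ) p
      nlinarith
  · unfold gammaFn
    split_ifs with h
    · obtain ⟨h1, h2⟩ := abs_le.mp h
      have habs : |t + δ| = t + δ := abs_of_nonneg (by linarith)
      rw [habs]
      rcases le_total 0 δ with h3 | h3
      · exact B1Lpos hp ht δ ⟨h3, h2⟩
      · have := B1Lneg hp ht (-δ) ⟨by linarith, by linarith⟩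
        simp only [sub_neg_eq_add, neg_neg] at this
        have hsq : (-δ)^2 = δ^2 := by ring
        rw [hsq] at this
        linarith
    · push_neg at h
      rcases le_total 0 δ with h3 | h3
      · have habs : |t + δ| = t + δ := abs_of_nonneg (by linarith)
        have haδ : |δ| = δ := abs_of_nonneg h3
        rw [haδ] at h ⊢
        rw [habs]
        exact B2Lpos hp ht δ (mem_Ici.mpr h.le)
      · have haδ : |δ| = -δ := abs_of_nonpos h3
        rw [haδ] at h ⊢
        have habs : |t + δ| = -δ - t := by
          rw [abs_of_nonpos (by linarith)]; ring
        rw [habs]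
        have := B2Lneg hp ht (-δ) (mem_Ici.mpr h.le)
        linarith

lemma core_upp {p t : ℝ} (hp : 1 < p) (ht : 0 ≤ t) (δ : ℝ) :
    |t+δ|^p ≤ t^p + p*t^(p-1)*δ + 2^p * gammaFn p t δ := by
  have h2p0 : (0:ℝ) < 2^p := rpow_pos_of_pos (by norm_num) p
  have h2ge : (1:ℝ) ≤ 2^p := by
    rw [show (1:ℝ) = 2^(0:ℝ) from (rpow_zero 2).symm]
    exact rpow_le_rpow_of_exponent_le (by norm_num) (by linarith)
  rcases eq_or_lt_of_le ht with rfl | ht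
  · have h0p : (0:ℝ)^p = 0 := zero_rpow (by positivity)
    have h0p1 : (0:ℝ)^(p-1) = 0 := zero_rpow (by intro h; linarith [h] : p - 1 ≠ 0)
    rw [h0p, h0p1]
    unfold gammaFn
    split_ifs with h
    · have : δ = 0 := by
        have := abs_nonneg δ; have := abs_eq_zero.mp (le_antisymm h this)
        exact this
      subst this
      simp [h0p]
    · rw [h0p]
      have : |0 + δ| = |δ| := by norm_num
      rw [this]
      have h3 : (0:ℝ) ≤ |δ|^p := rpow_nonneg (abs_nonneg δ) p
      nlinarith
  · unfold gammaFn
    split_ifs with h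
    · obtain ⟨h1, h2⟩ := abs_le.mp h
      have habs : |t + δ| = t + δ := abs_of_nonneg (by linarith)
      rw [habs]
      rcases le_total 0 δ with h3 | h3
      · exact B1Upos hp ht δ ⟨h3, h2⟩
      · have := B1Uneg hp ht (-δ) ⟨by linarith, by linarith⟩
        simp only [sub_neg_eq_add, neg_neg] at this
        have hsq : (-δ)^2 = δ^2 := by ring
        rw [hsq] at this
        linarith
    · push_neg at h
      rcases le_total 0 δ with h3 | h3
      · have habs : |t + δ| = t + δ := abs_of_nonneg (by linarith)
        have haδ : |δ| = δ := abs_of_nonneg h3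
        rw [haδ] at h ⊢
        rw [habs]
        exact B2Upos hp ht δ (mem_Ici.mpr h.le)
      · have haδ : |δ| = -δ := abs_of_nonpos h3
        rw [haδ] at h ⊢
        have habs : |t + δ| = -δ - t := by
          rw [abs_of_nonpos (by linarith)]; ring
        rw [habs]
        have := B2Uneg hp ht (-δ) (mem_Ici.mpr h.le)
        linarith

lemma sq_bern {p s : ℝ} (hp : 2 ≤ p) (hs : 1 ≤ s) : 1 + p/2*(s^(2:ℕ) - 1) ≤ s^p := by
  have hs0 : (0:ℝ) ≤ s := by linarith
  have h1 : -1 ≤ (s^(2:ℕ) - 1 : ℝ) := by nlinarith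
  have h := one_add_mul_self_le_rpow_one_add h1 (p := p/2) (by linarith)
  have h2 : (1 + (s^(2:ℕ) - 1) : ℝ) = s^(2:ℕ) := by ring
  rw [h2] at h
  have h3 : ((s^(2:ℕ):ℝ))^(p/2) = s^p := by
    rw [← rpow_natCast s 2, ← rpow_mul hs0]
    norm_num
    rw [show (2:ℝ)*(p/2) = p by ring]
  rw [h3] at h
  exact h

lemma branch_trans {p t r : ℝ} (hp2 : 2 ≤ p) (ht : 0 < t) (htr : t ≤ r) :
    p/2 * t^(p-2) * r^(2:ℕ) ≤ r^p + (p/2 - 1)*t^p := by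
  have hr : 0 < r := lt_of_lt_of_le ht htr
  have hs : 1 ≤ r/t := (one_le_div ht).mpr htr
  have h := sq_bern hp2 hs
  have htp : (0:ℝ) < t^p := rpow_pos_of_pos ht p
  have hmul := mul_le_mul_of_nonneg_right h htp.le
  have hrt : (r/t)^p * t^p = r^p := by
    rw [div_rpow hr.le ht.le]
    field_simp
  have hsq : ((r/t)^(2:ℕ) : ℝ) * t^p = r^(2:ℕ) * t^(p-2) := by
    have htp2 : t^(p-2) * t^(2:ℕ) = t^p := by
      rw [← rpow_natCast t 2, ← rpow_add ht]
      norm_num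
    have ht2 : (t:ℝ)^(2:ℕ) ≠ 0 := by positivity
    field_simp
    nlinarith [htp2]
  nlinarith [hmul, hrt, hsq]

lemma scale_core {s u : ℝ} (hs : 0 ≤ s) (hu0 : 0 < u) (hu1 : u ≤ 1) :
    s * u^s * (1-u) ≤ 1 - u^s := by
  have hus : (0:ℝ) < u^s := rpow_pos_of_pos hu0 s
  have h1 : u^(-s) = Real.exp (-s * Real.log u) := by
    rw [rpow_def_of_pos hu0]; ring_nf
  have h2 : 1 + -s * Real.log u ≤ u^(-s) := by
    rw [h1]; exact Real.add_one_le_exp _ |>.trans_eq' (by ring)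
  have h3 : Real.log u ≤ u - 1 := Real.log_le_sub_one_of_pos hu0
  have h4 : 1 + s*(1-u) ≤ u^(-s) := by nlinarith
  have h5 : u^(-s) * u^s = 1 := by
    rw [← rpow_add hu0]; norm_num
  nlinarith [mul_le_mul_of_nonneg_right h4 hus.le]

set_option maxHeartbeats 1000000 in
lemma gammaFn_scale {p t lam : ℝ} (hp : 1 < p) (ht : 0 ≤ t) (hl0 : 0 < lam)
    (hl1 : lam ≤ 1) (x : ℝ) :
    gammaFn p t (lam * x) ≤ lam ^ (1 + min 1 (p-1)) * gammaFn p t x := by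
  have hm0 : 0 < min 1 (p-1) := lt_min (by norm_num) (by linarith)
  have hm1 : min 1 (p-1) ≤ 1 := min_le_left _ _
  have hlp : (0:ℝ) < lam ^ (1 + min 1 (p-1)) := rpow_pos_of_pos hl0 _
  have hp0 : 0 < p := by linarith
  have hlabs : |lam * x| = lam * |x| := by
    rw [abs_mul, abs_of_pos hl0]
  rcases eq_or_ne x 0 with rfl | hx0
  · simp only [mul_zero]
    have : gammaFn p t 0 = 0 := by
      unfold gammaFn
      rw [abs_zero]
      split_ifs with h
      · ring
      · exfalso; exact h ht
    rw [this]; simp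
  have hax : 0 < |x| := abs_pos.mpr hx0
  unfold gammaFn
  rw [hlabs]
  split_ifs with h1 h2 h2
  · -- both small
    have hnn : (0:ℝ) ≤ p/2 * t^(p-2) * x^(2:ℕ) := by positivity
    have hl2 : lam^((2:ℕ):ℝ) ≤ lam ^ (1 + min 1 (p-1)) :=
      rpow_le_rpow_of_exponent_ge hl0 hl1 (by push_cast; linarith)
    rw [rpow_natCast] at hl2
    calc p/2 * t^(p-2) * (lam*x)^(2:ℕ) = lam^(2:ℕ) * (p/2 * t^(p-2) * x^(2:ℕ)) := by ring
      _ ≤ lam^(1 + min 1 (p-1)) * (p/2 * t^(p-2) * x^(2:ℕ)) := by nlinarith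
  · -- lam*|x| ≤ t < |x|
    push_neg at h2
    have ht0 : 0 < t := lt_of_lt_of_le (by positivity) h1
    rcases le_total 2 p with hp2 | hp2
    · -- p ≥ 2 : min = 1, exponent 2
      have hmin : min 1 (p-1) = 1 := min_eq_left (by linarith)
      rw [hmin]
      have hbt := branch_trans hp2 ht0 h2.le
      have hl2 : lam^(1+(1:ℝ)) = lam^(2:ℕ) := by
        rw [show (1+(1:ℝ)) = ((2:ℕ):ℝ) by norm_num, rpow_natCast]
      rw [hl2]
      have habs2 : (lam*x)^(2:ℕ) = lam^(2:ℕ) * |x|^(2:ℕ) := by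
        rw [show (lam*x)^(2:ℕ) = (lam*|x|)^(2:ℕ) by
          rw [mul_pow, mul_pow, sq_abs]]
        ring
      rw [habs2]
      have hll : (0:ℝ) ≤ lam^(2:ℕ) := by positivity
      calc p/2*t^(p-2)*(lam^(2:ℕ)*|x|^(2:ℕ)) = lam^(2:ℕ) * (p/2*t^(p-2)*|x|^(2:ℕ)) := by ring
        _ ≤ lam^(2:ℕ) * (|x|^p + (p/2-1)*t^p) := by nlinarith
    · -- p ≤ 2 : min = p-1, exponent p
      have hmin : min 1 (p-1) = p-1 := min_eq_right (by linarith)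
      rw [hmin, show 1 + (p-1) = p by ring]
      have hlx : 0 < lam * |x| := by positivity
      have hkey : t^(p-2) ≤ (lam*|x|)^(p-2) :=
        rpow_le_rpow_of_nonpos hlx h1 (by linarith)
      have hid : (lam*|x|)^(p-2) * (lam*|x|)^(2:ℕ) = (lam*|x|)^p := by
        rw [← rpow_natCast (lam*|x|) 2, ← rpow_add hlx]
        norm_num
      have hmr : (lam*|x|)^p = lam^p * |x|^p := mul_rpow hl0.le hax.le
      have hx2 : (lam*x)^(2:ℕ) = (lam*|x|)^(2:ℕ) := by
        rw [mul_pow, mul_pow, sq_abs]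
      rw [hx2]
      have hstep : p/2*t^(p-2)*(lam*|x|)^(2:ℕ) ≤ p/2*(lam^p*|x|^p) := by
        calc p/2*t^(p-2)*(lam*|x|)^(2:ℕ) ≤ p/2*(lam*|x|)^(p-2)*(lam*|x|)^(2:ℕ) := by
              have h2nn : (0:ℝ) ≤ (lam*|x|)^(2:ℕ) := by positivity
              nlinarith [mul_le_mul_of_nonneg_right hkey h2nn, hp0]
          _ = p/2*(lam^p*|x|^p) := by rw [mul_assoc, hid, hmr]
      have hfin : p/2*|x|^p ≤ |x|^p + (p/2-1)*t^p := by
        have : t^p ≤ |x|^p := rpow_le_rpow ht h2.le hp0.le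
        nlinarith
      have hlpn : (0:ℝ) ≤ lam^p := (rpow_pos_of_pos hl0 p).le
      nlinarith
  · -- t < lam*|x| but |x| ≤ t : impossible
    exfalso
    push_neg at h1
    nlinarith [hax]
  · -- both large
    push_neg at h1 h2
    have hmr : (lam*|x|)^p = lam^p * |x|^p := mul_rpow hl0.le hax.le
    rw [show |lam*x| = lam*|x| from by rw [abs_mul, abs_of_pos hl0]] at *
    rw [hmr]
    have htpn : (0:ℝ) ≤ t^p := rpow_nonneg ht p
    have hlp1 : lam^p ≤ 1 := rpow_le_one hl0.le hl1 hp0.le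
    rcases le_total 2 p with hp2 | hp2
    · -- p ≥ 2, exponent 2
      have hmin : min 1 (p-1) = 1 := min_eq_left (by linarith)
      rw [hmin, show (1+(1:ℝ)) = ((2:ℕ):ℝ) by norm_num, rpow_natCast]
      have ht0 : 0 ≤ t := ht
      have hTle : t^p ≤ lam^p*|x|^p := by
        rw [← hmr]; exact rpow_le_rpow ht h1.le hp0.le
      -- scalar: with u = lam², s = (p-2)/2 : s u^s (1-u) ≤ 1 - u^s
      have hu0 : (0:ℝ) < lam^(2:ℕ) := by positivity
      have hu1 : lam^(2:ℕ) ≤ 1 := by nlinarith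
      have hsc := scale_core (s := (p-2)/2) (by linarith) hu0 hu1
      have hus : (lam^(2:ℕ):ℝ)^((p-2)/2) = lam^(p-2) := by
        rw [← rpow_natCast lam 2, ← rpow_mul hl0.le]
        norm_num
        rw [show (2:ℝ)*((p-2)/2) = p-2 by ring]
      rw [hus] at hsc
      have hl22 : lam^(p-2) * lam^(2:ℕ) = lam^p := by
        rw [← rpow_natCast lam 2, ← rpow_add hl0]
        norm_num
      -- goal : lam^p*|x|^p + (p/2-1)*t^p ≤ lam^2*(|x|^p + (p/2-1)*t^p)
      have hXnn : (0:ℝ) ≤ |x|^p := rpow_nonneg hax.le p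
      rw [← hl22] at hTle ⊢
      have hmul := mul_le_mul_of_nonneg_right hsc (mul_nonneg hu0.le hXnn)
      have h1b : (0:ℝ) ≤ 1 - lam^(2:ℕ) := by nlinarith
      have hs0' : (0:ℝ) ≤ p/2 - 1 := by linarith
      have hT1 := mul_le_mul_of_nonneg_right hTle (mul_nonneg hs0' h1b)
      set A := lam^(p-2) with hA
      set B := lam^(2:ℕ) with hB
      set X := |x|^p with hX
      set T := t^p with hT
      ring_nf at hT1 hmul ⊢
      linarith [hT1, hmul]
    · -- p ≤ 2, exponent p
      have hmin : min 1 (p-1) = p-1 := min_eq_right (by linarith)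
      rw [hmin, show 1 + (p-1) = p by ring]
      nlinarith [mul_nonneg (mul_nonneg (by linarith : (0:ℝ) ≤ 1 - p/2) htpn)
        (by linarith : (0:ℝ) ≤ 1 - lam^p)]

lemma low_f {p : ℝ} (hp : 1 < p) (f δ : ℝ) :
    |f|^p + (p * |f|^(p-2) * f) * δ + (p-1)/(p*2^p) * gammaFn p |f| δ ≤ |f + δ|^p := by
  rcases lt_trichotomy f 0 with hf | rfl | hf
  · have habs : |f| = -f := abs_of_neg hf
    have hfpos : 0 < -f := by linarith
    have hgrad : p * |f|^(p-2) * f = -(p * (-f)^(p-1)) := by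
      rw [habs]
      have : (-f)^(p-2) * (-f) = (-f)^(p-1) := by
        rw [← rpow_add_one hfpos.ne' (p-2)]; ring_nf
      nlinarith [this]
    have hout : |f + δ| = |(-f) + (-δ)| := by
      rw [show (-f) + (-δ) = -(f + δ) by ring, abs_neg]
    have hγ : gammaFn p |f| δ = gammaFn p (-f) (-δ) := by
      rw [habs, gammaFn_neg]
    rw [hout, hγ, hgrad, habs]
    have := core_low hp hfpos.le (-δ)
    linarith
  · simp only [abs_zero, mul_zero, zero_mul, zero_add]
    have h0p : (0:ℝ)^p = 0 := zero_rpow (by positivity)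
    have h0p1 : (0:ℝ)^(p-1) = 0 := zero_rpow (by intro h; linarith [h] : p - 1 ≠ 0)
    have := core_low hp le_rfl δ
    rw [h0p, h0p1] at this
    simp only [zero_add] at this ⊢
    rw [h0p]
    linarith [this]
  · have habs : |f| = f := abs_of_pos hf
    have hgrad : p * |f|^(p-2) * f = p * f^(p-1) := by
      rw [habs]
      have : f^(p-2) * f = f^(p-1) := by
        rw [← rpow_add_one hf.ne' (p-2)]; ring_nf
      nlinarith [this]
    rw [hgrad, habs]
    have := core_low hp hf.le δ
    linarith

lemma upp_f {p : ℝ} (hp : 1 < p) (f δ : ℝ) :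
    |f + δ|^p ≤ |f|^p + (p * |f|^(p-2) * f) * δ + 2^p * gammaFn p |f| δ := by
  rcases lt_trichotomy f 0 with hf | rfl | hf
  · have habs : |f| = -f := abs_of_neg hf
    have hfpos : 0 < -f := by linarith
    have hgrad : p * |f|^(p-2) * f = -(p * (-f)^(p-1)) := by
      rw [habs]
      have : (-f)^(p-2) * (-f) = (-f)^(p-1) := by
        rw [← rpow_add_one hfpos.ne' (p-2)]; ring_nf
      nlinarith [this]
    have hout : |f + δ| = |(-f) + (-δ)| := by
      rw [show (-f) + (-δ) = -(f + δ) by ring, abs_neg]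
    have hγ : gammaFn p |f| δ = gammaFn p (-f) (-δ) := by
      rw [habs, gammaFn_neg]
    rw [hout, hγ, hgrad, habs]
    have := core_upp hp hfpos.le (-δ)
    linarith
  · simp only [abs_zero, mul_zero, zero_mul, zero_add]
    have h0p : (0:ℝ)^p = 0 := zero_rpow (by positivity)
    have h0p1 : (0:ℝ)^(p-1) = 0 := zero_rpow (by intro h; linarith [h] : p - 1 ≠ 0)
    have := core_upp hp le_rfl δ
    rw [h0p, h0p1] at this
    simp only [zero_add] at this ⊢
    rw [h0p]
    linarith [this]
  · have habs : |f| = f := abs_of_pos hf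
    have hgrad : p * |f|^(p-2) * f = p * f^(p-1) := by
      rw [habs]
      have : f^(p-2) * f = f^(p-1) := by
        rw [← rpow_add_one hf.ne' (p-2)]; ring_nf
      nlinarith [this]
    rw [hgrad, habs]
    have := core_upp hp hf.le δ
    linarith

/-- per-coordinate bound for the lower (optimality) direction -/
lemma step_low {p : ℝ} (hp : 1 < p) (f w : ℝ) :
    |f|^p - |f - w|^p ≤ (p * |f|^(p-2) * f) * w - (p-1)/(p*2^p) * gammaFn p |f| w := by
  have h := low_f hp f (-w)
  rw [show f + -w = f - w by ring] at h
  rw [show gammaFn p |f| (-w) = gammaFn p |f| w from gammaFn_neg p _ w] at h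
  linarith

/-- per-coordinate bound for the update direction -/
lemma step_up {p lam : ℝ} (hp : 1 < p) (hl0 : 0 < lam) (hl1 : lam ≤ 1)
    (hlam : lam ^ (min 1 (p-1)) ≤ (p-1)/(p*4^p)) (f u : ℝ) :
    |f - lam*u|^p ≤ |f|^p
      - lam*((p * |f|^(p-2) * f) * u - (p-1)/(p*2^p) * gammaFn p |f| u) := by
  have h2p0 : (0:ℝ) < 2^p := rpow_pos_of_pos (by norm_num) p
  have h := upp_f hp f (-(lam*u))
  rw [show f + -(lam*u) = f - lam*u by ring,
    show gammaFn p |f| (-(lam*u)) = gammaFn p |f| (lam*u) from gammaFn_neg p _ _] at h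
  have hscale := gammaFn_scale hp (abs_nonneg f) hl0 hl1 u
  have hsplit : lam ^ (1 + min 1 (p-1)) = lam * lam ^ (min 1 (p-1)) := by
    rw [rpow_add hl0, rpow_one]
  have h4p : (4:ℝ)^p = 2^p * 2^p := by
    rw [show (4:ℝ) = 2*2 by norm_num, mul_rpow (by norm_num) (by norm_num)]
  have hcc : (p-1)/(p*4^p) * 2^p = (p-1)/(p*2^p) := by
    rw [h4p]
    field_simp
  have hγu : 0 ≤ gammaFn p |f| u := gammaFn_nonneg hp (abs_nonneg f) u
  have hkey : 2^p * gammaFn p |f| (lam*u) ≤ lam * ((p-1)/(p*2^p)) * gammaFn p |f| u := by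
    calc 2^p * gammaFn p |f| (lam*u) ≤ 2^p * (lam ^ (1 + min 1 (p-1)) * gammaFn p |f| u) := by
          nlinarith
      _ = lam * (2^p * lam ^ (min 1 (p-1))) * gammaFn p |f| u := by rw [hsplit]; ring
      _ ≤ lam * ((p-1)/(p*2^p)) * gammaFn p |f| u := by
          have h1 : 2^p * lam ^ (min 1 (p-1)) ≤ 2^p * ((p-1)/(p*4^p)) := by nlinarith
          have h2 : (2:ℝ)^p * ((p-1)/(p*4^p)) = (p-1)/(p*2^p) := by
            rw [← hcc]; ring
          rw [← h2]
          have : 0 ≤ lam * gammaFn p |f| u := mul_nonneg hl0.le hγu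
          nlinarith
  nlinarith [h, hkey]


end AuxLemmas

section Aux2
open Real Set

/-- one step of the residual iteration.  If `OPT = min_{Cz=v}‖Az−b‖_p^p`,
`Cx = v`, `Δ̃` is an `α`-approximate solution of the residual problem at `x`, and
`λ ∈ (0,1]` with `λ^{min{1,p−1}} ≤ (p−1)/(p·4^p)`, then
`‖A(x−λΔ̃)−b‖_p^p − OPT ≤ (1 − λ/α)(‖Ax−b‖_p^p − OPT)`. -/
theorem stmt9 (n d : ℕ) (p : ℝ) (hp : 1 < p)
    (A : Matrix (Fin n) (Fin d) ℝ) (b : Fin n → ℝ)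
    (C : Matrix (Fin d) (Fin d) ℝ) (v : Fin d → ℝ)
    (OPT : ℝ)
    (hOPT : IsLeast ((fun z => ∑ i, |(A.mulVec z - b) i| ^ p) '' {z | C.mulVec z = v}) OPT)
    (x : Fin d → ℝ) (hx : C.mulVec x = v)
    (α : ℝ) (hα : 1 ≤ α)
    (M : ℝ) (hM : IsGreatest ((fun Δ => resObj p A b x Δ) '' {Δ | C.mulVec Δ = 0}) M)
    (Δt : Fin d → ℝ) (hΔtF : C.mulVec Δt = 0)
    (hΔtApprox : (1 / α) * M ≤ resObj p A b x Δt)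
    (lam : ℝ) (hlam0 : 0 < lam) (hlam1 : lam ≤ 1)
    (hlam : lam ^ (min 1 (p - 1)) ≤ (p - 1) / (p * 4 ^ p)) :
    ∑ i, |(A.mulVec (x - lam • Δt) - b) i| ^ p - OPT
      ≤ (1 - lam / α) * ((∑ i, |(A.mulVec x - b) i| ^ p) - OPT) := by
  have hα0 : (0:ℝ) < α := by linarith
  set f : Fin n → ℝ := A.mulVec x - b with hf
  set u : Fin n → ℝ := A.mulVec Δt with hu
  set Sold : ℝ := ∑ i, |f i| ^ p with hSold
  -- OPT ≤ Sold
  have hOPTle : OPT ≤ Sold := hOPT.2 ⟨x, hx, rfl⟩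
  -- obtain minimizer z
  obtain ⟨z, hzmem, hzeq⟩ := hOPT.1
  -- Step B : Sold - OPT ≤ M
  have hgapM : Sold - OPT ≤ M := by
    have hCzero : C.mulVec (x - z) = 0 := by
      rw [Matrix.mulVec_sub, hx, hzmem, sub_self]
    have hAw : A.mulVec (x - z) = fun i => f i - (A.mulVec z - b) i := by
      funext i
      rw [Matrix.mulVec_sub]
      simp [hf, Pi.sub_apply]
      try ring
    have hres : Sold - OPT ≤ resObj p A b x (x - z) := by
      have hOPTz : (∑ i, |(A.mulVec z - b) i| ^ p) = OPT := hzeq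
      have hper : ∀ i, |f i| ^ p - |(A.mulVec z - b) i| ^ p
          ≤ (p * |f i| ^ (p-2) * f i) * (A.mulVec (x-z)) i
            - (p-1)/(p*2^p) * gammaFn p (|f i|) ((A.mulVec (x-z)) i) := by
        intro i
        have hw := step_low hp (f i) ((A.mulVec (x-z)) i)
        have heq : f i - (A.mulVec (x-z)) i = (A.mulVec z - b) i := by
          rw [hAw]; simp
        rw [heq] at hw
        exact hw
      have hsum := Finset.sum_le_sum (fun i (_ : i ∈ (Finset.univ : Finset (Fin n))) => hper i)
      rw [Finset.sum_sub_distrib, Finset.sum_sub_distrib, ← Finset.mul_sum] at hsum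
      unfold resObj
      rw [← hf]
      calc Sold - OPT = ∑ i, |f i|^p - ∑ i, |(A.mulVec z - b) i|^p := by rw [hSold, hOPTz]
        _ ≤ _ := hsum
    calc Sold - OPT ≤ resObj p A b x (x - z) := hres
      _ ≤ M := hM.2 ⟨x - z, hCzero, rfl⟩
  -- Step C : new value bound
  have hAnew : A.mulVec (x - lam • Δt) - b = fun i => f i - lam * u i := by
    funext i
    rw [Matrix.mulVec_sub, Matrix.mulVec_smul]
    simp [hf, hu, Pi.sub_apply, Pi.smul_apply, smul_eq_mul]
    try ring
  have hnew : ∑ i, |(A.mulVec (x - lam • Δt) - b) i| ^ p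
      ≤ Sold - lam * resObj p A b x Δt := by
    rw [hAnew]
    have hper : ∀ i, |f i - lam * u i| ^ p ≤ |f i|^p
        - lam*((p * |f i|^(p-2) * f i) * u i - (p-1)/(p*2^p) * gammaFn p (|f i|) (u i)) :=
      fun i => step_up hp hlam0 hlam1 hlam (f i) (u i)
    have hsum := Finset.sum_le_sum (fun i (_ : i ∈ (Finset.univ : Finset (Fin n))) => hper i)
    rw [Finset.sum_sub_distrib, ← Finset.mul_sum, Finset.sum_sub_distrib,
      ← Finset.mul_sum] at hsum
    unfold resObj
    rw [← hf, ← hu]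
    simpa [hSold] using hsum
  -- Step D : conclude
  have hMα : lam * ((1/α) * (Sold - OPT)) ≤ lam * resObj p A b x Δt := by
    have h1 : (1/α) * (Sold - OPT) ≤ (1/α) * M :=
      mul_le_mul_of_nonneg_left hgapM (by positivity)
    exact mul_le_mul_of_nonneg_left (h1.trans hΔtApprox) hlam0.le
  have hfinal : ∑ i, |(A.mulVec (x - lam • Δt) - b) i| ^ p - OPT
      ≤ (Sold - OPT) - lam * (1/α) * (Sold - OPT) := by
    have := hnew
    nlinarith [hMα]
  calc ∑ i, |(A.mulVec (x - lam • Δt) - b) i| ^ p - OPT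
      ≤ (Sold - OPT) - lam * (1/α) * (Sold - OPT) := hfinal
    _ = (1 - lam / α) * (Sold - OPT) := by field_simp

end Aux2
end

section
/- Let 2 ≤ p < ∞, A ∈ ℝ^{n×d}, b ∈ ℝⁿ, C ∈ ℝ^{d×d}, v ∈ ℝ^d, OPT = min_{Cz=v} ‖Az − b‖_p^p, and let α ≥ 1 and λ ∈ (0,1] with λ^{min{1, p−1}} ≤ (p−1)/(p·4^p). Let x⁽⁰⁾ minimize ‖Ax − b‖₂² subject to Cx = v, and for each t let x⁽ᵗ⁺¹⁾ = x⁽ᵗ⁾ − λ·Δ̃⁽ᵗ⁾, where Δ̃⁽ᵗ⁾ is an α-approximate solution to the residual problem at x⁽ᵗ⁾. Then for every t ≥ 0, ‖Ax⁽ᵗ⁾ − b‖_p^p − OPT ≤ (1 − λ/α)^t · (n^{(p−2)/2} − 1) · OPT. -/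
open Matrix Finset

namespace St10


lemma pPos {p : ℝ} (hp : 2 ≤ p) : 0 < p := lt_of_lt_of_le two_pos hp

lemma two_rpow_pos (p : ℝ) : (0:ℝ) < 2 ^ p := Real.rpow_pos_of_pos two_pos p

lemma four_le_two_rpow {p : ℝ} (hp : 2 ≤ p) : (4:ℝ) ≤ 2 ^ p := by
  have h : (2:ℝ) ^ ((2:ℕ):ℝ) ≤ 2 ^ p := by
    apply Real.rpow_le_rpow_of_exponent_le one_le_two
    push_cast; linarith
  rw [Real.rpow_natCast] at h
  norm_num at h
  linarith

lemma one_add_le_two_rpow {p : ℝ} (hp : 2 ≤ p) : 1 + p ≤ 2 ^ p := by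
  have h := one_add_mul_self_le_rpow_one_add (s := (1:ℝ)) (by norm_num) (p := p) (by linarith)
  norm_num at h
  linarith

lemma gammaFn_nonneg {p : ℝ} (hp : 2 ≤ p) {t : ℝ} (ht : 0 ≤ t) (x : ℝ) :
    0 ≤ gammaFn p t x := by
  unfold gammaFn
  have hp0 := pPos hp
  split
  · have h1 : (0:ℝ) ≤ t ^ (p-2) := Real.rpow_nonneg ht _
    positivity
  · have h1 : (0:ℝ) ≤ |x| ^ p := Real.rpow_nonneg (abs_nonneg x) _
    have h2 : (0:ℝ) ≤ t ^ p := Real.rpow_nonneg ht _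
    nlinarith

lemma gammaFn_neg (p t x : ℝ) : gammaFn p t (-x) = gammaFn p t x := by
  unfold gammaFn
  simp [abs_neg, neg_sq]

lemma gammaFn_zero_left {p : ℝ} (hp : 2 ≤ p) (x : ℝ) : gammaFn p 0 x = |x| ^ p := by
  have hp0 := pPos hp
  unfold gammaFn
  split
  next h =>
    have hx : x = 0 := abs_nonpos_iff.mp h
    subst hx
    simp [Real.zero_rpow (by linarith : p ≠ 0)]
  next h =>
    rw [Real.zero_rpow (by linarith : p ≠ 0)]
    ring

lemma sq_rpow_half {q : ℝ} {y : ℝ} (hy : 0 ≤ y) : (y ^ (2:ℕ)) ^ (q/2) = y ^ q := by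
  rw [← Real.rpow_natCast y 2, ← Real.rpow_mul hy]
  congr 1
  ring

lemma gammaFn_scale_t {p : ℝ} (hp : 2 ≤ p) {a : ℝ} (ha : 0 < a) (x : ℝ) :
    gammaFn p a x = a ^ p * gammaFn p 1 (x / a) := by
  have hp0 := pPos hp
  have hap : (0:ℝ) < a ^ p := Real.rpow_pos_of_pos ha p
  have ha2 : (0:ℝ) < a ^ (2:ℕ) := by positivity
  have hcond : |x| ≤ a ↔ |x / a| ≤ 1 := by
    rw [abs_div, abs_of_pos ha, div_le_one ha]
  have hsplit : a ^ p = a ^ (p-2) * a ^ (2:ℕ) := by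
    rw [← Real.rpow_natCast a 2, ← Real.rpow_add ha]
    norm_num
  unfold gammaFn
  by_cases h : |x| ≤ a
  · rw [if_pos h, if_pos (hcond.mp h), Real.one_rpow]
    rw [div_pow, hsplit]
    field_simp
  · rw [if_neg h, if_neg (fun hc => h (hcond.mpr hc)), Real.one_rpow, abs_div,
      abs_of_pos ha, Real.div_rpow (abs_nonneg x) ha.le]
    field_simp




lemma rpow_two_eq (y : ℝ) : y ^ (2:ℝ) = y ^ (2:ℕ) := by
  rw [← Real.rpow_natCast y 2]; norm_num

/-- key scalar: `w^r (1 + r(1-w)) ≤ 1` for `0 < w ≤ 1`, `0 ≤ r`. -/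
lemma key_wr {w r : ℝ} (hw0 : 0 < w) (hw1 : w ≤ 1) (hr : 0 ≤ r) :
    w ^ r * (1 + r * (1 - w)) ≤ 1 := by
  rcases le_or_gt r 1 with h1 | h1
  · have hgm := Real.geom_mean_le_arith_mean2_weighted hr (by linarith : (0:ℝ) ≤ 1 - r)
      hw0.le (by norm_num : (0:ℝ) ≤ 1) (by ring)
    rw [Real.one_rpow, mul_one] at hgm
    have h2 : (0:ℝ) ≤ 1 + r * (1 - w) := by nlinarith
    nlinarith [sq_nonneg (r * (1 - w))]
  · have hiw1 : 1 ≤ 1/w := one_le_one_div hw0 hw1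
    have hb := one_add_mul_self_le_rpow_one_add (s := 1/w - 1) (by linarith) h1.le
    rw [show (1 + (1/w - 1)) = 1/w by ring] at hb
    have hdiv : (1/w) ^ r = 1 / w ^ r := by
      rw [Real.div_rpow (by norm_num) hw0.le, Real.one_rpow]
    rw [hdiv] at hb
    have hwr : (0:ℝ) < w ^ r := Real.rpow_pos_of_pos hw0 r
    have h3 : w ^ r * (1 + r * (1/w - 1)) ≤ 1 := by
      calc w ^ r * (1 + r * (1/w - 1)) ≤ w ^ r * (1 / w ^ r) :=
            mul_le_mul_of_nonneg_left hb hwr.le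
        _ = 1 := by field_simp
    have h4 : 1 - w ≤ 1/w - 1 := by
      have he : (1/w - 1) - (1 - w) = (1-w)^2/w := by field_simp
      have hnn : 0 ≤ (1-w)^2/w := by positivity
      linarith
    have h5 : 1 + r*(1-w) ≤ 1 + r*(1/w-1) := by nlinarith [mul_le_mul_of_nonneg_left h4 hr]
    calc w^r*(1+r*(1-w)) ≤ w^r*(1+r*(1/w-1)) := mul_le_mul_of_nonneg_left h5 hwr.le
      _ ≤ 1 := h3

/-- core: `(p/2) t^(p-2) x^2 ≤ |x|^p + (p/2-1) t^p` when `0 ≤ t ≤ |x|`. -/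
lemma core_outer {p t x : ℝ} (hp : 2 ≤ p) (ht : 0 ≤ t) (htx : t ≤ |x|) :
    (p/2) * t ^ (p-2) * x ^ 2 ≤ |x| ^ p + (p/2 - 1) * t ^ p := by
  have hp0 := pPos hp
  rcases eq_or_lt_of_le ht with h0 | h0
  · -- t = 0
    by_cases hp2 : p = 2
    · subst hp2
      rw [← h0, show (2:ℝ)-2 = 0 by norm_num, Real.rpow_zero,
        show ((0:ℝ)^(2:ℝ)) = 0 from Real.zero_rpow two_ne_zero,
        show |x|^(2:ℝ) = x^2 from by rw [rpow_two_eq, sq_abs]]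
      norm_num
    · rw [← h0, Real.zero_rpow (fun hc => hp2 (by linarith)), Real.zero_rpow (by linarith : p ≠ 0)]
      have := Real.rpow_nonneg (abs_nonneg x) p
      nlinarith
  · -- t > 0
    have hx0 : 0 < |x| := lt_of_lt_of_le h0 htx
    set s : ℝ := x^2 / t^2 with hs
    have hs1 : 1 ≤ s := by
      rw [hs, le_div_iff₀ (by positivity)]
      have := sq_abs x
      nlinarith
    have hb := one_add_mul_self_le_rpow_one_add (s := s - 1) (by linarith) (p := p/2) (by linarith)
    rw [show (1 + (s-1)) = s by ring] at hb
    have hsp : s ^ (p/2) = |x| ^ p / t ^ p := by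
      rw [hs, Real.div_rpow (sq_nonneg x) (by positivity)]
      rw [show (x^2) = |x|^(2:ℕ) by rw [sq_abs], show (t^2) = t^(2:ℕ) by norm_num]
      rw [← Real.rpow_natCast |x| 2, ← Real.rpow_mul (abs_nonneg x),
        ← Real.rpow_natCast t 2, ← Real.rpow_mul ht]
      push_cast
      rw [show (2:ℝ)*(p/2) = p by ring]
    rw [hsp] at hb
    have htp : (0:ℝ) < t ^ p := Real.rpow_pos_of_pos h0 p
    have ht2 : t ^ p = t ^ (p-2) * t ^ (2:ℕ) := by
      rw [← Real.rpow_natCast t 2, ← Real.rpow_add h0]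
      norm_num
    have hb2 : t ^ p * (1 + (p/2) * (s - 1)) ≤ |x| ^ p := by
      calc t ^ p * (1 + (p/2) * (s-1)) ≤ t ^ p * (|x|^p / t^p) :=
            mul_le_mul_of_nonneg_left hb htp.le
        _ = |x| ^ p := by field_simp
    have hts : t ^ p * s = t ^ (p-2) * x^2 := by
      rw [hs, ht2]
      field_simp
    nlinarith [hb2, hts]

/-- LemC: `γ(t, l x) ≤ l² γ(t, x)` for `0 ≤ l ≤ 1`. -/
lemma gammaFn_smul_le {p : ℝ} (hp : 2 ≤ p) {t l : ℝ} (ht : 0 ≤ t) (hl0 : 0 ≤ l)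
    (hl1 : l ≤ 1) (x : ℝ) :
    gammaFn p t (l * x) ≤ l ^ 2 * gammaFn p t x := by
  have hp0 := pPos hp
  have habs : |l * x| = l * |x| := by rw [abs_mul, abs_of_nonneg hl0]
  unfold gammaFn
  by_cases h1 : |x| ≤ t
  · have h2 : |l * x| ≤ t := by
      rw [habs]
      calc l * |x| ≤ 1 * |x| := mul_le_mul_of_nonneg_right hl1 (abs_nonneg x)
        _ = |x| := one_mul _
        _ ≤ t := h1
    rw [if_pos h2, if_pos h1]
    apply le_of_eq
    ring
  · rw [if_neg h1]
    push_neg at h1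
    by_cases h2 : |l * x| ≤ t
    · rw [if_pos h2]
      have hcore := core_outer hp ht h1.le
      calc (p/2) * t^(p-2) * (l*x)^2 = l^2 * ((p/2) * t^(p-2) * x^2) := by ring
        _ ≤ l^2 * (|x|^p + (p/2-1)*t^p) := mul_le_mul_of_nonneg_left hcore (sq_nonneg l)
    · rw [if_neg h2]
      push_neg at h2
      have hlx : t < l * |x| := by rwa [habs] at h2
      have hl0' : 0 < l := by
        rcases eq_or_lt_of_le hl0 with h | h
        · exfalso; rw [← h, zero_mul] at hlx; linarith
        · exact h
      set r : ℝ := (p-2)/2 with hrdef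
      have hr : 0 ≤ r := by rw [hrdef]; linarith
      have hXnn : 0 ≤ |x|^p := Real.rpow_nonneg (abs_nonneg x) p
      have hTnn : 0 ≤ t^p := Real.rpow_nonneg ht p
      have hw1' : l^2 ≤ 1 := by nlinarith
      have hkey := key_wr (w := l^2) (by positivity) hw1' hr
      have hlxp : |l*x|^p = l^p * |x|^p := by
        rw [habs, Real.mul_rpow hl0 (abs_nonneg x)]
      have htlp : t^p ≤ l^p * |x|^p := by
        have h := Real.rpow_le_rpow ht hlx.le (le_of_lt hp0)
        rwa [Real.mul_rpow hl0 (abs_nonneg x)] at h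
      have hlp : l ^ p = l^(2:ℕ) * (l^(2:ℕ)) ^ r := by
        rw [← Real.rpow_natCast l 2, ← Real.rpow_mul hl0, ← Real.rpow_add hl0']
        push_cast
        rw [show (2:ℝ) + 2*r = p by rw [hrdef]; ring]
      rw [hlxp, hlp]
      rw [hlp] at htlp
      have h1' : r*(1-l^2)*(t^p) ≤ r*(1-l^2)*(l^(2:ℕ) * (l^(2:ℕ))^r*|x|^p) :=
        mul_le_mul_of_nonneg_left htlp (by nlinarith)
      have h2' : (l^2*|x|^p) * ((l^(2:ℕ))^r*(1+r*(1-l^2))) ≤ (l^2*|x|^p) * 1 :=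
        mul_le_mul_of_nonneg_left hkey (by positivity)
      have hpr : p/2 - 1 = r := by rw [hrdef]; ring
      rw [hpr]
      nlinarith [h1', h2']



/-- monotone helper -/
lemma mono_help {f f' : ℝ → ℝ} {D : Set ℝ} (hD : Convex ℝ D)
    (hf : ∀ y : ℝ, HasDerivAt f (f' y) y) (h0 : ∀ y ∈ interior D, 0 ≤ f' y) :
    MonotoneOn f D :=
  monotoneOn_of_hasDerivWithinAt_nonneg hD
    (fun y _ => (hf y).continuousAt.continuousWithinAt)
    (fun y _ => (hf y).hasDerivWithinAt) h0

lemma hasDeriv_one_add {p : ℝ} (hp : 2 ≤ p) (y : ℝ) :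
    HasDerivAt (fun z : ℝ => (1+z) ^ p) (p * (1+y)^(p-1)) y := by
  have h1 : HasDerivAt (fun z : ℝ => 1 + z) 1 y := (hasDerivAt_id y).const_add 1
  have h2 := Real.hasDerivAt_rpow_const (x := 1 + y) (p := p) (Or.inr (by linarith))
  have h3 := HasDerivAt.comp y h2 h1
  simpa [Function.comp_def] using h3

lemma hasDeriv_one_sub {p : ℝ} (hp : 2 ≤ p) (y : ℝ) :
    HasDerivAt (fun z : ℝ => (1-z) ^ p) (-(p * (1-y)^(p-1))) y := by
  have h1 : HasDerivAt (fun z : ℝ => 1 - z) (-1) y := by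
    exact (hasDerivAt_id' y).const_sub 1
  have h2 := Real.hasDerivAt_rpow_const (x := 1 - y) (p := p) (Or.inr (by linarith))
  have h3 := HasDerivAt.comp y h2 h1
  simpa [Function.comp_def] using h3

/-- (I): `(1+x)^p ≥ 1 + p x + p(p-1)/2 x²` for `x ≥ 0`. -/
lemma ineq_I {p : ℝ} (hp : 2 ≤ p) {x : ℝ} (hx : 0 ≤ x) :
    1 + p*x + (p*(p-1)/2)*x^2 ≤ (1+x)^p := by
  have hp0 := pPos hp
  set F : ℝ → ℝ := fun z => (1+z)^p - (1 + p*z + (p*(p-1)/2)*z^2) with hF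
  have hder : ∀ y : ℝ, HasDerivAt F (p*(1+y)^(p-1) - (p + (p*(p-1))*y)) y := by
    intro y
    have h1 := hasDeriv_one_add hp y
    have h2 : HasDerivAt (fun z : ℝ => 1 + p*z + (p*(p-1)/2)*z^2)
        (p + (p*(p-1))*y) y := by
      have ha : HasDerivAt (fun z : ℝ => p*z) p y := by simpa using (hasDerivAt_id y).const_mul p
      have hb : HasDerivAt (fun z : ℝ => z^2) (2*y) y := by
        simpa using hasDerivAt_pow 2 y
      have hc := hb.const_mul (p*(p-1)/2)
      have := (ha.const_add 1).add hc
      exact this.congr_deriv (by ring)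
    exact h1.sub h2
  have hmono : MonotoneOn F (Set.Ici 0) := by
    apply mono_help (convex_Ici 0) hder
    intro y hy
    rw [interior_Ici] at hy
    have hy0 : 0 < y := hy
    have hb := one_add_mul_self_le_rpow_one_add (s := y) (by linarith) (p := p-1) (by linarith)
    nlinarith
  have h0 : F 0 = 0 := by
    simp [hF, Real.one_rpow]
  have := hmono (Set.self_mem_Ici) hx hx
  rw [h0] at this
  simp only [hF] at this
  linarith

/-- (II): `(1-e)^p ≥ 1 - p e + ((p-1)/(2·2^p)) e²` for `0 ≤ e ≤ 1`. -/
lemma ineq_II {p : ℝ} (hp : 2 ≤ p) {e : ℝ} (h0 : 0 ≤ e) (h1 : e ≤ 1) :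
    1 - p*e + ((p-1)/(2*2^p))*e^2 ≤ (1-e)^p := by
  have hp0 := pPos hp
  have h2p : (0:ℝ) < 2^p := Real.rpow_pos_of_pos two_pos p
  set c : ℝ := (p-1)/(2*2^p) with hc
  have hcnn : 0 ≤ c := by
    rw [hc]; exact div_nonneg (by linarith) (by positivity)
  have hge1 : (1:ℝ) ≤ 2^p := by
    have h := Real.rpow_le_rpow_of_exponent_le one_le_two (by linarith : (0:ℝ) ≤ p)
    rwa [Real.rpow_zero] at h
  have hc2 : 2*c ≤ p := by
    rw [hc, mul_comm, div_mul_eq_mul_div, div_le_iff₀ (by positivity)]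
    nlinarith [mul_nonneg hp0.le (sub_nonneg.mpr hge1)]
  set F : ℝ → ℝ := fun z => (1-z)^p - (1 - p*z + c*z^2) with hF
  have hder : ∀ y : ℝ, HasDerivAt F (-(p*(1-y)^(p-1)) + p - 2*c*y) y := by
    intro y
    have h1' := hasDeriv_one_sub hp y
    have h2' : HasDerivAt (fun z : ℝ => 1 - p*z + c*z^2) (-p + 2*c*y) y := by
      have ha : HasDerivAt (fun z : ℝ => p*z) p y := by simpa using (hasDerivAt_id y).const_mul p
      have hb : HasDerivAt (fun z : ℝ => z^2) (2*y) y := by simpa using hasDerivAt_pow 2 y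
      have hc' := hb.const_mul c
      have := ((ha.neg.const_add 1).add hc')
      exact this.congr_deriv (by ring)
    have := h1'.sub h2'
    exact this.congr_deriv (by ring)
  have hmono : MonotoneOn F (Set.Icc 0 1) := by
    apply mono_help (convex_Icc 0 1) hder
    intro y hy
    rw [interior_Icc] at hy
    obtain ⟨hy0, hy1⟩ := hy
    have hbd : (1-y)^(p-1) ≤ 1-y := by
      have := Real.rpow_le_rpow_of_exponent_ge (by linarith : 0 < 1-y)
        (by linarith : 1-y ≤ 1) (by linarith : 1 ≤ p-1)
      rwa [Real.rpow_one] at this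
    nlinarith
  have h00 : F 0 = 0 := by simp [hF, Real.one_rpow]
  have := hmono (Set.mem_Icc.mpr ⟨le_refl 0, by norm_num⟩) (Set.mem_Icc.mpr ⟨h0, h1⟩) h0
  rw [h00] at this
  simp only [hF] at this
  linarith

/-- (III): `(1+x)^p ≤ 1 + p x + p 2^(p-1) x²` for `0 ≤ x ≤ 1`. -/
lemma ineq_III {p : ℝ} (hp : 2 ≤ p) {x : ℝ} (h0 : 0 ≤ x) (h1 : x ≤ 1) :
    (1+x)^p ≤ 1 + p*x + (p*2^(p-1))*x^2 := by
  have hp0 := pPos hp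
  have h2p : (0:ℝ) < 2^(p-1) := Real.rpow_pos_of_pos two_pos _
  set F : ℝ → ℝ := fun z => (1 + p*z + (p*2^(p-1))*z^2) - (1+z)^p with hF
  have hder : ∀ y : ℝ, HasDerivAt F (p + 2*(p*2^(p-1))*y - p*(1+y)^(p-1)) y := by
    intro y
    have h1' := hasDeriv_one_add hp y
    have ha : HasDerivAt (fun z : ℝ => p*z) p y := by simpa using (hasDerivAt_id y).const_mul p
    have hb : HasDerivAt (fun z : ℝ => z^2) (2*y) y := by simpa using hasDerivAt_pow 2 y
    have := ((ha.const_add 1).add (hb.const_mul (p*2^(p-1)))).sub h1'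
    exact this.congr_deriv (by ring)
  have hmono : MonotoneOn F (Set.Icc 0 1) := by
    apply mono_help (convex_Icc 0 1) hder
    intro y hy
    rw [interior_Icc] at hy
    obtain ⟨hy0, hy1⟩ := hy
    -- chord bound: (1+y)^(p-1) ≤ 1 + (2^(p-1)-1) y
    have hconv := (convexOn_rpow (p := p-1) (by linarith)).2
      (Set.mem_Ici.mpr (by norm_num : (0:ℝ) ≤ 1))
      (Set.mem_Ici.mpr (by norm_num : (0:ℝ) ≤ 2))
      (by linarith : 0 ≤ 1 - y) (le_of_lt hy0) (by ring)
    simp only [smul_eq_mul] at hconv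
    rw [show (1-y)*1 + y*2 = 1 + y by ring, Real.one_rpow] at hconv
    -- hconv : (1+y)^(p-1) ≤ (1-y)*1 + y*2^(p-1)
    nlinarith [mul_le_mul_of_nonneg_left hconv hp0.le,
      mul_nonneg (mul_nonneg hp0.le h2p.le) hy0.le, mul_nonneg hp0.le hy0.le]
  have h00 : F 0 = 0 := by simp [hF, Real.one_rpow]
  have := hmono (Set.mem_Icc.mpr ⟨le_refl 0, by norm_num⟩) (Set.mem_Icc.mpr ⟨h0, h1⟩) h0
  rw [h00] at this
  simp only [hF] at this
  linarith

/-- (IV): `(1-e)^p ≤ 1 - p e + p 2^(p-1) e²` for `0 ≤ e ≤ 1`. -/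
lemma ineq_IV {p : ℝ} (hp : 2 ≤ p) {e : ℝ} (h0 : 0 ≤ e) (h1 : e ≤ 1) :
    (1-e)^p ≤ 1 - p*e + (p*2^(p-1))*e^2 := by
  have hp0 := pPos hp
  have h2p : (0:ℝ) < 2^(p-1) := Real.rpow_pos_of_pos two_pos _
  have h2p' : (1:ℝ) + (p-1) ≤ 2^(p-1)*2 := by
    have hb := one_add_mul_self_le_rpow_one_add (s := (1:ℝ)) (by norm_num) (p := p) (by linarith)
    norm_num at hb
    have : (2:ℝ)^p = 2^(p-1)*2 := by
      rw [← Real.rpow_add_one (by norm_num : (2:ℝ) ≠ 0) (p-1)]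
      norm_num
    linarith [this ▸ hb]
  set F : ℝ → ℝ := fun z => (1 - p*z + (p*2^(p-1))*z^2) - (1-z)^p with hF
  have hder : ∀ y : ℝ, HasDerivAt F (-p + 2*(p*2^(p-1))*y + p*(1-y)^(p-1)) y := by
    intro y
    have h1' := hasDeriv_one_sub hp y
    have ha : HasDerivAt (fun z : ℝ => p*z) p y := by simpa using (hasDerivAt_id y).const_mul p
    have hb : HasDerivAt (fun z : ℝ => z^2) (2*y) y := by simpa using hasDerivAt_pow 2 y
    have := ((ha.neg.const_add 1).add (hb.const_mul (p*2^(p-1)))).sub h1'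
    exact this.congr_deriv (by ring)
  have hmono : MonotoneOn F (Set.Icc 0 1) := by
    apply mono_help (convex_Icc 0 1) hder
    intro y hy
    rw [interior_Icc] at hy
    obtain ⟨hy0, hy1⟩ := hy
    have hb := one_add_mul_self_le_rpow_one_add (s := -y) (by linarith) (p := p-1) (by linarith)
    rw [show (1 + -y) = 1 - y by ring] at hb
    nlinarith [mul_le_mul_of_nonneg_left hb hp0.le,
      mul_nonneg (mul_nonneg hp0.le hy0.le) (by linarith : (0:ℝ) ≤ 2^(p-1)*2 - (1+(p-1)))]
  have h00 : F 0 = 0 := by simp [hF, Real.one_rpow]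
  have := hmono (Set.mem_Icc.mpr ⟨le_refl 0, by norm_num⟩) (Set.mem_Icc.mpr ⟨h0, h1⟩) h0
  rw [h00] at this
  simp only [hF] at this
  linarith

lemma vlem {p : ℝ} (hp : 2 ≤ p) {v : ℝ} (h0 : 0 ≤ v) (h1 : v ≤ 1) :
    1 ≤ (1+v)^p/2 + (p-1)*(1-v)^(p-1) := by
  have hp0 := pPos hp
  have hb1 := one_add_mul_self_le_rpow_one_add (s := v) (by linarith) (p := p) (by linarith)
  have hnn : 0 ≤ (1-v)^(p-1) := Real.rpow_nonneg (by linarith) _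
  rcases le_or_gt 1 (p*v) with h | h
  · nlinarith
  · have hb2 := one_add_mul_self_le_rpow_one_add (s := -v) (by linarith) (p := p-1) (by linarith)
    rw [show (1 + -v) = 1 - v by ring] at hb2
    have hprod : 0 ≤ (1 - p*v) * ((p-1)^2 - p/2) := mul_nonneg (by linarith) (by nlinarith)
    nlinarith [mul_le_mul_of_nonneg_left hb2 (by linarith : (0:ℝ) ≤ p-1)]

lemma slem {p : ℝ} (hp : 2 ≤ p) {e : ℝ} (he : 2 ≤ e) :
    2^(1-p)*e^p ≤ (e-1)^p + (p-1)*e := by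
  have hp0 := pPos hp
  have he0 : (0:ℝ) < e := by linarith
  have he1 : (0:ℝ) ≤ e - 1 := by linarith
  set v : ℝ := 1 - 2/e with hv
  have hv0 : 0 ≤ v := by
    rw [hv, sub_nonneg, div_le_one he0]; linarith
  have hv1 : v ≤ 1 := by
    rw [hv]
    have : (0:ℝ) < 2/e := by positivity
    linarith
  have hvl := vlem hp hv0 hv1
  have hA : 1 + v = 2*(e-1)/e := by rw [hv]; field_simp; ring
  have hB : 1 - v = 2/e := by rw [hv]; ring
  have hXp : (1+v)^p = 2^p*(e-1)^p/e^p := by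
    rw [hA, Real.div_rpow (by positivity) he0.le, Real.mul_rpow (by norm_num) he1]
  have hYp : (1-v)^(p-1) = 2^(p-1)/e^(p-1) := by
    rw [hB, Real.div_rpow (by norm_num) he0.le]
  have hep : (0:ℝ) < e^p := Real.rpow_pos_of_pos he0 p
  have hep1 : (0:ℝ) < e^(p-1) := Real.rpow_pos_of_pos he0 _
  have hsplit : e^(p-1)*e = e^p := by
    rw [← Real.rpow_add_one he0.ne' (p-1)]
    norm_num
  have h2pm : (2:ℝ)^(p-1)*2 = 2^p := by
    rw [← Real.rpow_add_one (by norm_num : (2:ℝ) ≠ 0) (p-1)]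
    norm_num
  have hm : e^p ≤ e^p*((1+v)^p/2) + e^p*((p-1)*(1-v)^(p-1)) := by
    have h := mul_le_mul_of_nonneg_left hvl hep.le
    calc e^p = e^p*1 := by ring
      _ ≤ e^p*((1+v)^p/2 + (p-1)*(1-v)^(p-1)) := h
      _ = e^p*((1+v)^p/2) + e^p*((p-1)*(1-v)^(p-1)) := by ring
  have hm1 : e^p*((1+v)^p/2) = 2^(p-1)*(e-1)^p := by
    rw [hXp, ← h2pm]
    field_simp
  have hm2 : e^p*((p-1)*(1-v)^(p-1)) = (p-1)*(2^(p-1)*e) := by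
    rw [hYp, ← hsplit]
    field_simp
  have hfin : e^p ≤ 2^(p-1)*(e-1)^p + (p-1)*(2^(p-1)*e) := by
    rw [hm1, hm2] at hm
    exact hm
  have h21p : (2:ℝ)^(1-p)*2^(p-1) = 1 := by
    rw [← Real.rpow_add two_pos]
    norm_num
  have h2pos : (0:ℝ) < 2^(1-p) := Real.rpow_pos_of_pos two_pos _
  calc 2^(1-p)*e^p ≤ 2^(1-p)*(2^(p-1)*(e-1)^p + (p-1)*(2^(p-1)*e)) :=
        mul_le_mul_of_nonneg_left hfin h2pos.le
    _ = (2^(1-p)*2^(p-1))*(e-1)^p + (p-1)*((2^(1-p)*2^(p-1))*e) := by ring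
    _ = (e-1)^p + (p-1)*e := by rw [h21p]; ring

set_option maxHeartbeats 1000000 in
lemma lemA1 {p : ℝ} (hp : 2 ≤ p) (δ : ℝ) :
    1 + p*δ + ((p-1)/(p*2^p)) * gammaFn p 1 δ ≤ |1+δ| ^ p := by
  have hp0 := pPos hp
  have h2p : (0:ℝ) < 2^p := Real.rpow_pos_of_pos two_pos p
  have h4 : (4:ℝ) ≤ 2^p := four_le_two_rpow hp
  set κ : ℝ := (p-1)/(p*2^p) with hκ
  have hκ0 : 0 ≤ κ := by rw [hκ]; exact div_nonneg (by linarith) (by positivity)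
  have hκp2 : κ*(p/2) = (p-1)/(2*2^p) := by
    rw [hκ]; field_simp
  have hκ4 : κ ≤ 1/4 := by
    rw [hκ, div_le_div_iff₀ (by positivity) (by norm_num)]
    nlinarith
  have hκhalf : 2*κ ≤ 1 := by linarith
  have h14 : κ*(p-2) ≤ (1/4)*(p-2) := mul_le_mul_of_nonneg_right hκ4 (by linarith)
  have harith : 1 + κ*(p-2) ≤ p*(p-1)/2 := by nlinarith
  unfold gammaFn
  by_cases h1 : |δ| ≤ 1
  · rw [if_pos h1, Real.one_rpow]
    obtain ⟨hd1, hd2⟩ := abs_le.mp h1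
    rcases le_or_gt 0 δ with hd | hd
    · have hI := ineq_I hp hd
      rw [abs_of_nonneg (by linarith : (0:ℝ) ≤ 1+δ)]
      have hc1 : κ*(p/2) ≤ p*(p-1)/2 := by
        rw [hκp2, div_le_iff₀ (by positivity)]
        nlinarith [mul_nonneg (by linarith : (0:ℝ) ≤ p-1) (by nlinarith : (0:ℝ) ≤ p*2^p - 1)]
      nlinarith [mul_le_mul_of_nonneg_right hc1 (sq_nonneg δ)]
    · have hII := ineq_II hp (show 0 ≤ -δ by linarith) (show -δ ≤ 1 by linarith)
      rw [show (1+δ) = 1-(-δ) by ring]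
      rw [abs_of_nonneg (by linarith : (0:ℝ) ≤ 1-(-δ))]
      have heq : κ*(p/2*1*δ^2) = ((p-1)/(2*2^p))*(-δ)^2 := by
        rw [← hκp2]; ring
      nlinarith [hII, heq]
  · rw [if_neg h1, Real.one_rpow]
    push_neg at h1
    rcases le_or_gt 0 δ with hd | hd
    · -- δ > 1
      have hδ1 : 1 < δ := by rwa [abs_of_nonneg hd] at h1
      have hd0 : (0:ℝ) < δ := by linarith
      rw [abs_of_nonneg hd, abs_of_nonneg (by linarith : (0:ℝ) ≤ 1+δ)]
      have hA := ineq_I hp hd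
      have hδpnn : (0:ℝ) ≤ δ^p := Real.rpow_nonneg hd0.le p
      -- hB : δ^p + p*δ ≤ (1+δ)^p
      have hinv : (0:ℝ) ≤ 1/δ := by positivity
      have hb1 := one_add_mul_self_le_rpow_one_add (s := 1/δ) (by linarith) (p := p)
        (by linarith)
      have hmul : (1+δ)^p = δ^p*(1+1/δ)^p := by
        rw [← Real.mul_rpow hd0.le (by positivity)]
        congr 1
        field_simp
        ring
      have hdp1 : δ^(p-1) = δ^p/δ := by
        rw [Real.rpow_sub hd0, Real.rpow_one]
      have hdd : δ ≤ δ^(p-1) := by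
        have h := Real.rpow_le_rpow_of_exponent_le hδ1.le (by linarith : (1:ℝ) ≤ p-1)
        rwa [Real.rpow_one] at h
      have hB : δ^p + p*δ ≤ (1+δ)^p := by
        calc δ^p + p*δ ≤ δ^p + p*δ^(p-1) := by nlinarith
          _ = δ^p*(1 + p*(1/δ)) := by rw [hdp1]; field_simp
          _ ≤ δ^p*((1+1/δ)^p) := mul_le_mul_of_nonneg_left hb1 hδpnn
          _ = (1+δ)^p := hmul.symm
      have hκδ : κ*δ^p ≤ (1/2)*δ^p := by
        have h := mul_le_mul_of_nonneg_right hκhalf hδpnn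
        linarith
      have hδsq : (1:ℝ) ≤ δ^2 := by
        rw [show (1:ℝ) = 1^2 by norm_num]
        exact pow_le_pow_left₀ (by norm_num) hδ1.le 2
      have hsq2 : p*(p-1)/2 ≤ p*(p-1)/2*δ^2 := by
        have hnn : (0:ℝ) ≤ p*(p-1)/2 :=
          div_nonneg (mul_nonneg (by linarith) (by linarith)) (by norm_num)
        calc p*(p-1)/2 = p*(p-1)/2*1 := by ring
          _ ≤ p*(p-1)/2*δ^2 := mul_le_mul_of_nonneg_left hδsq hnn
      linarith [hA, hB, hκδ, harith, hsq2]
    · -- δ < -1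
      have hδ1 : 1 < -δ := by rwa [abs_of_neg hd] at h1
      rw [abs_of_neg hd, abs_of_neg (by linarith : 1+δ < 0)]
      have hE1 : (0:ℝ) ≤ (-(1+δ))^p := Real.rpow_nonneg (by linarith) p
      have hκ2pe : κ*2^p = (p-1)/p := by
        rw [hκ]
        field_simp
      have hq1 : (p-1)/p ≤ 1 := by
        rw [div_le_one hp0]; linarith
      rcases le_or_gt (-δ) 2 with he2 | he2
      · -- 1 < -δ ≤ 2
        have he2p : (-δ)^p ≤ 2^p := Real.rpow_le_rpow (by linarith) he2 hp0.le
        have hκe : κ*(-δ)^p ≤ 1 := by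
          have h1' : κ*(-δ)^p ≤ κ*2^p := mul_le_mul_of_nonneg_left he2p hκ0
          rw [hκ2pe] at h1'
          linarith
        have hκc : κ*(p/2-1) ≤ (p-2)/8 := by
          have h := mul_le_mul_of_nonneg_right hκ4 (show (0:ℝ) ≤ p/2-1 by linarith)
          linarith
        have hpe : p ≤ p*(-δ) := by nlinarith
        linarith [hE1, hκe, hκc, hpe]
      · -- -δ > 2
        have hS := slem hp he2.le
        have h2m : (2:ℝ)^(1-p)*2^p = 2 := by
          rw [← Real.rpow_add two_pos]
          norm_num
        have hκltm : κ*2^p ≤ 2 := by rw [hκ2pe]; linarith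
        have h21κ : κ ≤ 2^(1-p) := by nlinarith [h2m, h2p]
        have hκc2 : κ*(p/2-1) ≤ 1 := by
          rw [hκ, div_mul_eq_mul_div, div_le_one (by positivity)]
          nlinarith [one_add_le_two_rpow hp]
        have hκe2 : κ*(-δ)^p ≤ 2^(1-p)*(-δ)^p :=
          mul_le_mul_of_nonneg_right h21κ (Real.rpow_nonneg (by linarith) p)
        have hgoal : -(1+δ) = (-δ) - 1 := by ring
        rw [hgoal]
        linarith [hS, hκe2, hκc2, he2]

set_option maxHeartbeats 1000000 in
lemma lemB1 {p : ℝ} (hp : 2 ≤ p) (δ : ℝ) :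
    |1+δ| ^ p ≤ 1 + p*δ + 2^p * gammaFn p 1 δ := by
  have hp0 := pPos hp
  have h2p : (0:ℝ) < 2^p := Real.rpow_pos_of_pos two_pos p
  have h2p1 : (0:ℝ) < 2^(p-1) := Real.rpow_pos_of_pos two_pos _
  have h2psplit : (2:ℝ)^(p-1)*2 = 2^p := by
    rw [← Real.rpow_add_one (by norm_num : (2:ℝ) ≠ 0) (p-1)]
    norm_num
  have h1p2p : 1 + p ≤ 2^p := one_add_le_two_rpow hp
  unfold gammaFn
  by_cases h1 : |δ| ≤ 1
  · rw [if_pos h1, Real.one_rpow]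
    obtain ⟨hd1, hd2⟩ := abs_le.mp h1
    have heq : 2^p*(p/2*1*δ^2) = (p*2^(p-1))*δ^2 := by
      rw [← h2psplit]; ring
    rcases le_or_gt 0 δ with hd | hd
    · have hIII := ineq_III hp hd hd2
      rw [abs_of_nonneg (by linarith : (0:ℝ) ≤ 1+δ)]
      linarith [heq ▸ hIII]
    · have hIV := ineq_IV hp (show 0 ≤ -δ by linarith) (show -δ ≤ 1 by linarith)
      rw [show (1+δ) = 1-(-δ) by ring]
      rw [abs_of_nonneg (by linarith : (0:ℝ) ≤ 1-(-δ))]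
      nlinarith [hIV, heq]
  · rw [if_neg h1, Real.one_rpow]
    push_neg at h1
    rcases le_or_gt 0 δ with hd | hd
    · have hδ1 : 1 < δ := by rwa [abs_of_nonneg hd] at h1
      rw [abs_of_nonneg hd, abs_of_nonneg (by linarith : (0:ℝ) ≤ 1+δ)]
      have hup : (1+δ)^p ≤ 2^p*δ^p := by
        have h := Real.rpow_le_rpow (by linarith : (0:ℝ) ≤ 1+δ)
          (by linarith : 1+δ ≤ 2*δ) hp0.le
        rwa [Real.mul_rpow (by norm_num) (by linarith)] at h
      have h5 : (0:ℝ) ≤ 2^p*(p/2-1) := by nlinarith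
      nlinarith [hup, h5]
    · have hδ1 : 1 < -δ := by rwa [abs_of_neg hd] at h1
      rw [abs_of_neg hd, abs_of_neg (by linarith : 1+δ < 0)]
      have hup : (-(1+δ))^p ≤ (-δ)^p :=
        Real.rpow_le_rpow (by linarith) (by linarith) hp0.le
      have hee : -δ ≤ (-δ)^p := by
        have h := Real.rpow_le_rpow_of_exponent_le hδ1.le (by linarith : (1:ℝ) ≤ p)
        rwa [Real.rpow_one] at h
      have h3 : p*(-δ) ≤ (2^p-1)*(-δ) := by nlinarith
      have h4 : (2^p-1)*(-δ) ≤ (2^p-1)*(-δ)^p :=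
        mul_le_mul_of_nonneg_left hee (by linarith)
      have h5 : (0:ℝ) ≤ 2^p*(p/2-1) := by nlinarith
      nlinarith [hup, h3, h4, h5]

lemma kappa_le_one {p : ℝ} (hp : 2 ≤ p) : (p-1)/(p*2^p) ≤ 1 := by
  have hp0 := pPos hp
  have h4 := four_le_two_rpow hp
  rw [div_le_one (by positivity)]
  nlinarith

set_option maxHeartbeats 1000000 in
lemma lemA_nn {p : ℝ} (hp : 2 ≤ p) {a : ℝ} (ha : 0 ≤ a) (δ : ℝ) :
    |a|^p + p*|a|^(p-2)*a*δ + ((p-1)/(p*2^p)) * gammaFn p |a| δ ≤ |a+δ|^p := by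
  have hp0 := pPos hp
  have h2p : (0:ℝ) < 2^p := Real.rpow_pos_of_pos two_pos p
  rcases eq_or_lt_of_le ha with h0 | h0
  · rw [← h0, abs_zero, gammaFn_zero_left hp, Real.zero_rpow (by linarith : p ≠ 0)]
    rw [show p*(0:ℝ)^(p-2)*0*δ = 0 by ring]
    simp only [zero_add, add_zero]
    have hnn : 0 ≤ |δ|^p := Real.rpow_nonneg (abs_nonneg δ) p
    nlinarith [kappa_le_one hp]
  · rw [abs_of_pos h0, gammaFn_scale_t hp h0 δ]
    have hap : (0:ℝ) < a^p := Real.rpow_pos_of_pos h0 p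
    have hs := lemA1 hp (δ/a)
    have h := mul_le_mul_of_nonneg_left hs hap.le
    have habs2 : a * |1+δ/a| = |a+δ| := by
      calc a * |1+δ/a| = |a| * |1+δ/a| := by rw [abs_of_pos h0]
        _ = |a*(1+δ/a)| := (abs_mul a _).symm
        _ = |a+δ| := by congr 1; field_simp
    have hRHS : a^p*|1+δ/a|^p = |a+δ|^p := by
      rw [← Real.mul_rpow h0.le (abs_nonneg _), habs2]
    rw [hRHS] at h
    have hsplit : a^(p-1)*a = a^p := by
      rw [← Real.rpow_add_one h0.ne' (p-1)]
      congr 1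
      ring
    have haa : a^(p-2)*a = a^(p-1) := by
      rw [← Real.rpow_add_one h0.ne' (p-2)]
      congr 1
      ring
    have e2 : a^p*(p*(δ/a)) = p*(a^(p-2)*a)*δ := by
      rw [haa, ← hsplit]
      field_simp
    nlinarith [h, e2]

set_option maxHeartbeats 1000000 in
lemma lemB_nn {p : ℝ} (hp : 2 ≤ p) {a : ℝ} (ha : 0 ≤ a) (δ : ℝ) :
    |a+δ|^p ≤ |a|^p + p*|a|^(p-2)*a*δ + 2^p * gammaFn p |a| δ := by
  have hp0 := pPos hp
  have h2p : (0:ℝ) < 2^p := Real.rpow_pos_of_pos two_pos p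
  rcases eq_or_lt_of_le ha with h0 | h0
  · rw [← h0, abs_zero, gammaFn_zero_left hp, Real.zero_rpow (by linarith : p ≠ 0)]
    rw [show p*(0:ℝ)^(p-2)*0*δ = 0 by ring]
    simp only [zero_add, add_zero]
    have hnn : 0 ≤ |δ|^p := Real.rpow_nonneg (abs_nonneg δ) p
    nlinarith [mul_nonneg (show (0:ℝ) ≤ 2^p - 1 by nlinarith [one_add_le_two_rpow hp]) hnn]
  · rw [abs_of_pos h0, gammaFn_scale_t hp h0 δ]
    have hap : (0:ℝ) < a^p := Real.rpow_pos_of_pos h0 p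
    have hs := lemB1 hp (δ/a)
    have h := mul_le_mul_of_nonneg_left hs hap.le
    have habs2 : a * |1+δ/a| = |a+δ| := by
      calc a * |1+δ/a| = |a| * |1+δ/a| := by rw [abs_of_pos h0]
        _ = |a*(1+δ/a)| := (abs_mul a _).symm
        _ = |a+δ| := by congr 1; field_simp
    have hRHS : a^p*|1+δ/a|^p = |a+δ|^p := by
      rw [← Real.mul_rpow h0.le (abs_nonneg _), habs2]
    rw [hRHS] at h
    have hsplit : a^(p-1)*a = a^p := by
      rw [← Real.rpow_add_one h0.ne' (p-1)]
      congr 1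
      ring
    have haa : a^(p-2)*a = a^(p-1) := by
      rw [← Real.rpow_add_one h0.ne' (p-2)]
      congr 1
      ring
    have e2 : a^p*(p*(δ/a)) = p*(a^(p-2)*a)*δ := by
      rw [haa, ← hsplit]
      field_simp
    nlinarith [h, e2]

lemma lemA {p : ℝ} (hp : 2 ≤ p) (a δ : ℝ) :
    |a|^p + p*|a|^(p-2)*a*δ + ((p-1)/(p*2^p)) * gammaFn p |a| δ ≤ |a+δ|^p := by
  rcases le_or_gt 0 a with h | h
  · exact lemA_nn hp h δ
  · have h2 := lemA_nn hp (show (0:ℝ) ≤ -a by linarith) (-δ)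
    rw [abs_neg, gammaFn_neg, show -a + -δ = -(a+δ) by ring, abs_neg] at h2
    rw [show p*|a|^(p-2)*(-a)*(-δ) = p*|a|^(p-2)*a*δ by ring] at h2
    exact h2

lemma lemB {p : ℝ} (hp : 2 ≤ p) (a δ : ℝ) :
    |a+δ|^p ≤ |a|^p + p*|a|^(p-2)*a*δ + 2^p * gammaFn p |a| δ := by
  rcases le_or_gt 0 a with h | h
  · exact lemB_nn hp h δ
  · have h2 := lemB_nn hp (show (0:ℝ) ≤ -a by linarith) (-δ)
    rw [abs_neg, gammaFn_neg, show -a + -δ = -(a+δ) by ring, abs_neg] at h2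
    rw [show p*|a|^(p-2)*(-a)*(-δ) = p*|a|^(p-2)*a*δ by ring] at h2
    exact h2

end St10


namespace St10

lemma resObj_lower {n d : ℕ} {p : ℝ} (hp : 2 ≤ p) (A : Matrix (Fin n) (Fin d) ℝ)
    (b : Fin n → ℝ) (xx z : Fin d → ℝ) :
    (∑ i, |(A.mulVec xx - b) i| ^ p) - (∑ i, |(A.mulVec z - b) i| ^ p)
      ≤ resObj p A b xx (xx - z) := by
  have hcomp : ∀ i, (A.mulVec z - b) i
      = (A.mulVec xx - b) i + (-((A.mulVec (xx - z)) i)) := by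
    intro i
    simp only [Matrix.mulVec_sub, Pi.sub_apply]
    ring
  have hpt : ∀ i,
      |(A.mulVec xx - b) i| ^ p
        - (p * |(A.mulVec xx - b) i| ^ (p-2) * (A.mulVec xx - b) i) * (A.mulVec (xx - z)) i
        + ((p-1)/(p*2^p)) * gammaFn p (|(A.mulVec xx - b) i|) ((A.mulVec (xx - z)) i)
      ≤ |(A.mulVec z - b) i| ^ p := by
    intro i
    rw [hcomp i]
    have h := lemA hp ((A.mulVec xx - b) i) (-((A.mulVec (xx - z)) i))
    rw [gammaFn_neg] at h
    nlinarith [h]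
  have hsum := Finset.sum_le_sum (fun i (_ : i ∈ Finset.univ) => hpt i)
  rw [Finset.sum_add_distrib, Finset.sum_sub_distrib, ← Finset.mul_sum] at hsum
  unfold resObj
  linarith [hsum]

set_option maxHeartbeats 1000000 in
lemma resObj_step {n d : ℕ} {p : ℝ} (hp : 2 ≤ p) (A : Matrix (Fin n) (Fin d) ℝ)
    (b : Fin n → ℝ) (xx Δ : Fin d → ℝ) {lam : ℝ} (hl0 : 0 ≤ lam) (hl1 : lam ≤ 1)
    (hlam' : 2^p*lam ≤ (p-1)/(p*2^p)) :
    ∑ i, |(A.mulVec (xx - lam • Δ) - b) i| ^ p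
      ≤ (∑ i, |(A.mulVec xx - b) i| ^ p) - lam * resObj p A b xx Δ := by
  have h2p : (0:ℝ) < 2^p := Real.rpow_pos_of_pos two_pos p
  have hγnn : ∀ i, 0 ≤ gammaFn p (|(A.mulVec xx - b) i|) ((A.mulVec Δ) i) :=
    fun i => gammaFn_nonneg hp (abs_nonneg _) _
  have hcomp : ∀ i, (A.mulVec (xx - lam • Δ) - b) i
      = (A.mulVec xx - b) i + (-(lam * (A.mulVec Δ) i)) := by
    intro i
    simp only [Matrix.mulVec_sub, Matrix.mulVec_smul, Pi.sub_apply, Pi.smul_apply, smul_eq_mul]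
    ring
  have hpt : ∀ i,
      |(A.mulVec (xx - lam • Δ) - b) i| ^ p
      ≤ |(A.mulVec xx - b) i| ^ p
        - lam * ((p * |(A.mulVec xx - b) i| ^ (p-2) * (A.mulVec xx - b) i) * (A.mulVec Δ) i)
        + lam * (((p-1)/(p*2^p)) * gammaFn p (|(A.mulVec xx - b) i|) ((A.mulVec Δ) i)) := by
    intro i
    rw [hcomp i]
    have h := lemB hp ((A.mulVec xx - b) i) (-(lam * (A.mulVec Δ) i))
    rw [gammaFn_neg] at h
    have h2 := gammaFn_smul_le hp (abs_nonneg ((A.mulVec xx - b) i)) hl0 hl1 ((A.mulVec Δ) i)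
    have h3 : 2^p * gammaFn p (|(A.mulVec xx - b) i|) (lam * (A.mulVec Δ) i)
        ≤ lam * (((p-1)/(p*2^p)) * gammaFn p (|(A.mulVec xx - b) i|) ((A.mulVec Δ) i)) := by
      calc 2^p * gammaFn p (|(A.mulVec xx - b) i|) (lam * (A.mulVec Δ) i)
          ≤ 2^p * (lam^2 * gammaFn p (|(A.mulVec xx - b) i|) ((A.mulVec Δ) i)) :=
            mul_le_mul_of_nonneg_left h2 h2p.le
        _ = (2^p*lam)*(lam * gammaFn p (|(A.mulVec xx - b) i|) ((A.mulVec Δ) i)) := by ring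
        _ ≤ ((p-1)/(p*2^p))*(lam * gammaFn p (|(A.mulVec xx - b) i|) ((A.mulVec Δ) i)) :=
            mul_le_mul_of_nonneg_right hlam' (mul_nonneg hl0 (hγnn i))
        _ = lam * (((p-1)/(p*2^p)) * gammaFn p (|(A.mulVec xx - b) i|) ((A.mulVec Δ) i)) := by
            ring
    nlinarith [h, h3]
  calc ∑ i, |(A.mulVec (xx - lam • Δ) - b) i| ^ p
      ≤ ∑ i, (|(A.mulVec xx - b) i| ^ p
        - lam * ((p * |(A.mulVec xx - b) i| ^ (p-2) * (A.mulVec xx - b) i) * (A.mulVec Δ) i)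
        + lam * (((p-1)/(p*2^p)) * gammaFn p (|(A.mulVec xx - b) i|) ((A.mulVec Δ) i))) :=
        Finset.sum_le_sum (fun i _ => hpt i)
    _ = (∑ i, |(A.mulVec xx - b) i| ^ p) - lam * resObj p A b xx Δ := by
        unfold resObj
        rw [Finset.sum_add_distrib, Finset.sum_sub_distrib, ← Finset.mul_sum, ← Finset.mul_sum,
          ← Finset.mul_sum]
        ring

end St10


open St10 in
set_option maxHeartbeats 2000000 in
/-- convergence of the residual iteration.  If `OPT = min_{Cz=v}‖Az−b‖_p^p`,
`x⁽⁰⁾` minimizes `‖Ax−b‖₂²` subject to `Cx=v`, each `Δ̃⁽ᵗ⁾` is an `α`-approximate solution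
of the residual problem at `x⁽ᵗ⁾`, `x⁽ᵗ⁺¹⁾ = x⁽ᵗ⁾ − λΔ̃⁽ᵗ⁾` with `λ ∈ (0,1]` and
`λ^{min{1,p−1}} ≤ (p−1)/(p·4^p)`, then for every `t`:
`‖Ax⁽ᵗ⁾−b‖_p^p − OPT ≤ (1 − λ/α)^t (n^{(p−2)/2} − 1) OPT`. -/
theorem stmt10 (n d : ℕ) (p : ℝ) (hp : 2 ≤ p)
    (A : Matrix (Fin n) (Fin d) ℝ) (b : Fin n → ℝ)
    (C : Matrix (Fin d) (Fin d) ℝ) (v : Fin d → ℝ)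
    (OPT : ℝ)
    (hOPT : IsLeast ((fun z => ∑ i, |(A.mulVec z - b) i| ^ p) '' {z | C.mulVec z = v}) OPT)
    (α : ℝ) (hα : 1 ≤ α)
    (lam : ℝ) (hlam0 : 0 < lam) (hlam1 : lam ≤ 1)
    (hlam : lam ^ (min 1 (p - 1)) ≤ (p - 1) / (p * 4 ^ p))
    (x : ℕ → Fin d → ℝ) (Δt : ℕ → Fin d → ℝ) (M : ℕ → ℝ)
    (hx0F : C.mulVec (x 0) = v)
    (hx0Min : ∀ z, C.mulVec z = v →
      ∑ i, ((A.mulVec (x 0) - b) i) ^ 2 ≤ ∑ i, ((A.mulVec z - b) i) ^ 2)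
    (hM : ∀ t, IsGreatest
      ((fun Δ => resObj p A b (x t) Δ) '' {Δ | C.mulVec Δ = 0}) (M t))
    (hΔtF : ∀ t, C.mulVec (Δt t) = 0)
    (hΔtApprox : ∀ t, (1 / α) * M t ≤ resObj p A b (x t) (Δt t))
    (hiter : ∀ t, x (t + 1) = x t - lam • Δt t) :
    ∀ t : ℕ, ∑ i, |(A.mulVec (x t) - b) i| ^ p - OPT
      ≤ (1 - lam / α) ^ t * ((n : ℝ) ^ ((p - 2) / 2) - 1) * OPT := by

  have hp0 : 0 < p := lt_of_lt_of_le two_pos hp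
  have h2p : (0:ℝ) < 2^p := Real.rpow_pos_of_pos two_pos p
  obtain ⟨z₀, hz₀F, hz₀O⟩ := hOPT.1
  have hz₀F' : C.mulVec z₀ = v := hz₀F
  have hz₀O' : (∑ i, |(A.mulVec z₀ - b) i| ^ p) = OPT := hz₀O
  have hOPTnn : 0 ≤ OPT := by
    rw [← hz₀O']
    exact Finset.sum_nonneg fun i _ => Real.rpow_nonneg (abs_nonneg _) p
  have halphapos : 0 < α := lt_of_lt_of_le one_pos hα
  have hfactor : 0 ≤ 1 - lam/α := by
    have h1 : lam/α ≤ 1 := by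
      rw [div_le_one halphapos]; linarith
    linarith
  rcases Nat.eq_zero_or_pos n with hn | hn
  · subst hn
    have hO0 : OPT = 0 := by
      rw [← hz₀O']
      simp
    intro t
    simp [hO0]
  have hfeas : ∀ t, C.mulVec (x t) = v := by
    intro t
    induction t with
    | zero => exact hx0F
    | succ k ih =>
      rw [hiter k, Matrix.mulVec_sub, Matrix.mulVec_smul, hΔtF k, smul_zero, sub_zero, ih]
  have hlam' : 2^p * lam ≤ (p-1)/(p*2^p) := by
    have hmin : min 1 (p-1) = 1 := min_eq_left (by linarith)
    rw [hmin, Real.rpow_one] at hlam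
    have h4eq : (4:ℝ)^p = 2^p*2^p := by
      rw [show (4:ℝ) = 2*2 by norm_num, Real.mul_rpow (by norm_num) (by norm_num)]
    rw [h4eq] at hlam
    rw [le_div_iff₀ (by positivity)] at hlam ⊢
    nlinarith [hlam]
  -- per-step decrease
  have hstep : ∀ t,
      (∑ i, |(A.mulVec (x (t+1)) - b) i| ^ p) - OPT
        ≤ (1 - lam/α) * ((∑ i, |(A.mulVec (x t) - b) i| ^ p) - OPT) := by
    intro t
    have hres_low : (∑ i, |(A.mulVec (x t) - b) i| ^ p) - OPT
        ≤ resObj p A b (x t) (x t - z₀) := by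
      have h := resObj_lower hp A b (x t) z₀
      rw [hz₀O'] at h
      exact h
    have hmemset : (x t - z₀) ∈ {Δ : Fin d → ℝ | C.mulVec Δ = 0} := by
      show C.mulVec (x t - z₀) = 0
      rw [Matrix.mulVec_sub, hfeas t, hz₀F', sub_self]
    have hMup : resObj p A b (x t) (x t - z₀) ≤ M t :=
      (hM t).2 ⟨x t - z₀, hmemset, rfl⟩
    have hres : (1/α)*((∑ i, |(A.mulVec (x t) - b) i| ^ p) - OPT)
        ≤ resObj p A b (x t) (Δt t) := by
      have h1 : (1/α)*((∑ i, |(A.mulVec (x t) - b) i| ^ p) - OPT) ≤ (1/α)*(M t) :=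
        mul_le_mul_of_nonneg_left (le_trans hres_low hMup) (by positivity)
      exact le_trans h1 (hΔtApprox t)
    have hdec := resObj_step hp A b (x t) (Δt t) hlam0.le hlam1 hlam'
    rw [← hiter t] at hdec
    have hlr := mul_le_mul_of_nonneg_left hres hlam0.le
    have hfOPT : 0 ≤ (∑ i, |(A.mulVec (x t) - b) i| ^ p) - OPT := by
      have h := hOPT.2 ⟨x t, hfeas t, rfl⟩
      linarith [h]
    have hea : lam*((1/α)*((∑ i, |(A.mulVec (x t) - b) i| ^ p) - OPT))
        = (lam/α)*((∑ i, |(A.mulVec (x t) - b) i| ^ p) - OPT) := by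
      ring
    rw [hea] at hlr
    linarith [hdec, hlr]
  -- base case bound
  have hnpos : (0:ℝ) < (n:ℝ) := by exact_mod_cast hn
  have hbase : (∑ i, |(A.mulVec (x 0) - b) i| ^ p) ≤ (n:ℝ)^((p-2)/2) * OPT := by
    have hSnn : 0 ≤ ∑ i, ((A.mulVec (x 0) - b) i)^2 :=
      Finset.sum_nonneg fun i _ => sq_nonneg _
    have hstep1 : (∑ i, |(A.mulVec (x 0) - b) i| ^ p)
        ≤ (∑ i, ((A.mulVec (x 0) - b) i)^2)^(p/2) := by
      have hpt : ∀ i, |(A.mulVec (x 0) - b) i| ^ p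
          ≤ ((A.mulVec (x 0) - b) i)^2 * (∑ j, ((A.mulVec (x 0) - b) j)^2)^((p-2)/2) := by
        intro i
        have hne : (2:ℝ)+(p-2) ≠ 0 := by
          intro hc; apply ne_of_gt hp0; linarith
        have e1 : |(A.mulVec (x 0) - b) i|^(2:ℝ) * |(A.mulVec (x 0) - b) i|^(p-2)
            = |(A.mulVec (x 0) - b) i|^p := by
          rw [← Real.rpow_add' (abs_nonneg _) hne]
          congr 1
          ring
        have e2 : |(A.mulVec (x 0) - b) i|^(2:ℝ) = ((A.mulVec (x 0) - b) i)^2 := by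
          rw [rpow_two_eq, sq_abs]
        have e3 : |(A.mulVec (x 0) - b) i|^(p-2)
            = (((A.mulVec (x 0) - b) i)^2)^((p-2)/2) := by
          rw [← sq_abs, sq_rpow_half (abs_nonneg _)]
        have h2 : |(A.mulVec (x 0) - b) i|^(p-2)
            ≤ (∑ j, ((A.mulVec (x 0) - b) j)^2)^((p-2)/2) := by
          rw [e3]
          exact Real.rpow_le_rpow (sq_nonneg _)
            (Finset.single_le_sum (f := fun j => ((A.mulVec (x 0) - b) j)^2)
              (fun j _ => sq_nonneg _) (Finset.mem_univ i))
            (by linarith)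
        calc |(A.mulVec (x 0) - b) i|^p
            = ((A.mulVec (x 0) - b) i)^2 * |(A.mulVec (x 0) - b) i|^(p-2) := by
              rw [← e2, e1]
          _ ≤ ((A.mulVec (x 0) - b) i)^2 * (∑ j, ((A.mulVec (x 0) - b) j)^2)^((p-2)/2) :=
              mul_le_mul_of_nonneg_left h2 (sq_nonneg _)
      calc (∑ i, |(A.mulVec (x 0) - b) i| ^ p)
          ≤ ∑ i, ((A.mulVec (x 0) - b) i)^2 * (∑ j, ((A.mulVec (x 0) - b) j)^2)^((p-2)/2) :=
            Finset.sum_le_sum (fun i _ => hpt i)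
        _ = (∑ i, ((A.mulVec (x 0) - b) i)^2) * (∑ j, ((A.mulVec (x 0) - b) j)^2)^((p-2)/2) :=
            (Finset.sum_mul _ _ _).symm
        _ = (∑ i, ((A.mulVec (x 0) - b) i)^2)^(p/2) := by
            rcases eq_or_lt_of_le hSnn with h0 | h0
            · rw [← h0, zero_mul, Real.zero_rpow (by positivity : p/2 ≠ 0)]
            · nth_rewrite 1 [← Real.rpow_one (∑ i, ((A.mulVec (x 0) - b) i)^2)]
              rw [← Real.rpow_add h0]
              congr 1
              ring
    have hstep2' : (∑ i, ((A.mulVec (x 0) - b) i)^2)^(p/2)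
        ≤ (∑ i, ((A.mulVec z₀ - b) i)^2)^(p/2) :=
      Real.rpow_le_rpow hSnn (hx0Min z₀ hz₀F') (by linarith)
    have hstep3 : (∑ i, ((A.mulVec z₀ - b) i)^2)^(p/2) ≤ (n:ℝ)^((p-2)/2) * OPT := by
      have hw : ∑ _i : Fin n, 1/(n:ℝ) = 1 := by
        rw [Finset.sum_const, Finset.card_univ, Fintype.card_fin, nsmul_eq_mul]
        field_simp
      have hjen := Real.rpow_arith_mean_le_arith_mean_rpow Finset.univ (fun _ => 1/(n:ℝ))
        (fun i => (n:ℝ)*((A.mulVec z₀ - b) i)^2) (fun i _ => by positivity) hw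
        (fun i _ => mul_nonneg hnpos.le (sq_nonneg _)) (by linarith : 1 ≤ p/2)
      have hls : (∑ i, (1/(n:ℝ))*((n:ℝ)*((A.mulVec z₀ - b) i)^2))
          = ∑ i, ((A.mulVec z₀ - b) i)^2 :=
        Finset.sum_congr rfl (fun i _ => by field_simp)
      rw [hls] at hjen
      have hrs : (∑ i, (1/(n:ℝ))*((n:ℝ)*((A.mulVec z₀ - b) i)^2)^(p/2))
          = ∑ i, ((1/(n:ℝ))*(n:ℝ)^(p/2))*((((A.mulVec z₀ - b) i)^2)^(p/2)) :=
        Finset.sum_congr rfl (fun i _ => by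
          rw [Real.mul_rpow hnpos.le (sq_nonneg _)]
          ring)
      rw [hrs, ← Finset.mul_sum] at hjen
      have hsum_a : (∑ i, ((((A.mulVec z₀ - b) i)^2)^(p/2))) = OPT := by
        rw [← hz₀O']
        apply Finset.sum_congr rfl
        intro i _
        rw [← sq_abs, sq_rpow_half (abs_nonneg _)]
      have hcoef : (1/(n:ℝ))*((n:ℝ)^(p/2)) = (n:ℝ)^((p-2)/2) := by
        rw [show p/2 = 1 + (p-2)/2 by ring, Real.rpow_add hnpos, Real.rpow_one]
        field_simp
      rw [hsum_a, hcoef] at hjen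
      exact hjen
    linarith [hstep1, hstep2', hstep3]
  intro t
  induction t with
  | zero =>
    rw [pow_zero, one_mul]
    have : ((n:ℝ)^((p-2)/2) - 1) * OPT = (n:ℝ)^((p-2)/2)*OPT - OPT := by ring
    rw [this]
    linarith [hbase]
  | succ k ih =>
    calc (∑ i, |(A.mulVec (x (k+1)) - b) i| ^ p) - OPT
        ≤ (1 - lam/α) * ((∑ i, |(A.mulVec (x k) - b) i| ^ p) - OPT) := hstep k
      _ ≤ (1 - lam/α) * ((1 - lam/α)^k * ((n:ℝ)^((p-2)/2) - 1) * OPT) :=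
          mul_le_mul_of_nonneg_left ih hfactor
      _ = (1 - lam/α)^(k+1) * ((n:ℝ)^((p-2)/2) - 1) * OPT := by ring
end
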